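/- arXiv:2111.04359 — 5 statements merged into one kernel-verified Lean document; each statement's English description precedes it below -/
import Mathlib

section
/- For all indices k = Σ_{l=0}^{n} k_l 2^l and j = Σ_{l=0}^{n} j_l 2^l with bits k_l, j_l ∈ {0,1}, the matrix entry of U_Φ satisfies ⟨k| U_Φ |j⟩ = 2^{−(n+1)/2} · u_{k₀}ᵀ · M_{n, j₁, k₁} · M_{n−1, j₂, k₂} ⋯ M_{1, j_n, k_n} · v_{j₀}, i.e. the l-th factor from the right is M_{l, j_{n+1−l}, k_{n+1−l}}. -/
open Complex Matrix

/-- The single-qubit gate `R_X(−π/2) = (1/√2)[[1, i],[i, 1]]`. -/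
noncomputable def RXgate : Matrix (Fin 2) (Fin 2) ℂ :=
  (1 / Real.sqrt 2 : ℝ) • !![1, I; I, 1]

/-- The single-qubit phase gate `Φ = [[1,0],[0,e^{ix}]]`. -/
noncomputable def phaseGate (x : ℝ) : Matrix (Fin 2) (Fin 2) ℂ :=
  !![1, 0; 0, Complex.exp (I * x)]

/-- A single-qubit gate `A` applied to the photon qubit (bit `0`) of the
`(n+1)`-qubit space `ℂ^{2^{n+1}}`, whose computational basis vectors `|j⟩` are
indexed by integers `j = Σ_l j_l 2^l`. -/
noncomputable def photonGate (n : ℕ) (A : Matrix (Fin 2) (Fin 2) ℂ) :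
    Matrix (Fin (2 ^ (n + 1))) (Fin (2 ^ (n + 1))) ℂ :=
  fun k j => if (k : ℕ) / 2 = (j : ℕ) / 2
    then A ⟨(k : ℕ) % 2, by omega⟩ ⟨(j : ℕ) % 2, by omega⟩ else 0

/-- CNOT gate on `ℂ^{2^{n+1}}` with control the photon qubit (bit `0`) and target
bit `t`: it maps `|j⟩` to `|j XOR 2^t⟩` when bit `0` of `j` is `1`, else `|j⟩`. -/
def cnotGate (n t : ℕ) : Matrix (Fin (2 ^ (n + 1))) (Fin (2 ^ (n + 1))) ℂ :=
  fun k j =>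
    if (k : ℕ) = (if (j : ℕ) % 2 = 1 then (j : ℕ) ^^^ 2 ^ t else (j : ℕ)) then 1 else 0

/-- The `k`-th step `S_k` of the which-path-detector circuit: for `1 ≤ k ≤ n` it applies
`R_X(−π/2)` followed by `Φ_k` to the photon qubit and then a CNOT with control the photon
qubit and target the `k`-th detector qubit (bit `n+1−k`); `S_{n+1}` applies `R_X(−π/2)`
followed by `Φ_{n+1}` to the photon qubit (no CNOT). -/
noncomputable def stepGate (n : ℕ) (φ : ℕ → ℝ) (k : ℕ) :
    Matrix (Fin (2 ^ (n + 1))) (Fin (2 ^ (n + 1))) ℂ :=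
  (if k ≤ n then cnotGate n (n + 1 - k) else 1) * photonGate n (phaseGate (φ k) * RXgate)

/-- The ordered product `S_k ⋯ S_2 S_1`. -/
noncomputable def Sprod (n : ℕ) (φ : ℕ → ℝ) :
    ℕ → Matrix (Fin (2 ^ (n + 1))) (Fin (2 ^ (n + 1))) ℂ
  | 0 => 1
  | k + 1 => stepGate n φ (k + 1) * Sprod n φ k

/-- The unitary operator `U_Φ = S_{n+1} S_n ⋯ S_1` on the `(n+1)`-qubit space. -/
noncomputable def Uphi (n : ℕ) (φ : ℕ → ℝ) :
    Matrix (Fin (2 ^ (n + 1))) (Fin (2 ^ (n + 1))) ℂ :=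
  Sprod n φ (n + 1)

/-- The rotation matrix `R(a) = [[cos a, −sin a],[sin a, cos a]]` (with complex entries). -/
noncomputable def Rrot (a : ℝ) : Matrix (Fin 2) (Fin 2) ℂ :=
  !![(Real.cos a : ℂ), -(Real.sin a : ℂ); (Real.sin a : ℂ), (Real.cos a : ℂ)]

/-- A `4×4` matrix built from four `2×2` blocks. -/
def blk (A B C D : Matrix (Fin 2) (Fin 2) ℂ) : Matrix (Fin 4) (Fin 4) ℂ :=
  Matrix.reindex finSumFinEquiv finSumFinEquiv (Matrix.fromBlocks A B C D)

/-- The `4×4` block matrices `M_{j,D,e}`: for `j ≤ n−1`,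
`M_{j,D,e} = [[I₂, R(π/2)],[0,0]]` if `e = D` and `[[0,0],[R(φ_j+π/2), R(φ_j)]]` if `e ≠ D`;
for `j = n`, `M_{n,D,e} = [[I₂,0],[R(φ_{n+1}+π/2),0]]·[[I₂,R(π/2)],[0,0]]` if `e = D` and
`[[0,R(π/2)],[0,R(φ_{n+1})]]·[[0,0],[R(φ_n+π/2),R(φ_n)]]` if `e ≠ D`. -/
noncomputable def Mmat (n : ℕ) (φ : ℕ → ℝ) (j : ℕ) (D e : Bool) :
    Matrix (Fin 4) (Fin 4) ℂ :=
  if j = n then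
    if e = D then
      blk 1 0 (Rrot (φ (n + 1) + Real.pi / 2)) 0 * blk 1 (Rrot (Real.pi / 2)) 0 0
    else
      blk 0 (Rrot (Real.pi / 2)) 0 (Rrot (φ (n + 1))) *
        blk 0 0 (Rrot (φ n + Real.pi / 2)) (Rrot (φ n))
  else
    if e = D then blk 1 (Rrot (Real.pi / 2)) 0 0
    else blk 0 0 (Rrot (φ j + Real.pi / 2)) (Rrot (φ j))

/-- `v₀ = (1,0,0,0)ᵀ`, `v₁ = (0,0,1,0)ᵀ` (indexed by the corresponding bit). -/
def vvec : Bool → Fin 4 → ℂ := fun Q => if Q then ![0, 0, 1, 0] else ![1, 0, 0, 0]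

/-- `u₀ = (1,i,0,0)ᵀ`, `u₁ = (0,0,1,i)ᵀ` (indexed by the corresponding bit). -/
noncomputable def uvec : Bool → Fin 4 → ℂ := fun k => if k then ![0, 0, 1, I] else ![1, I, 0, 0]

/-- The ordered product `M_{n, j₁, k₁} · M_{n−1, j₂, k₂} ⋯ M_{1, j_n, k_n}` (its `l`-th
factor from the right is `M_{l, j_{n+1−l}, k_{n+1−l}}`), where `jb`/`kb` give the binary
digits of the column/row indices. -/
noncomputable def Mprod (n : ℕ) (φ : ℕ → ℝ) (jb kb : ℕ → Bool) :
    ℕ → Matrix (Fin 4) (Fin 4) ℂ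
  | 0 => 1
  | l + 1 => Mmat n φ (l + 1) (jb (n - l)) (kb (n - l)) * Mprod n φ jb kb l

-- AUX PART (to be inserted before stmt5)
section Aux

/-- generic transfer matrix -/
noncomputable def gmatx (x : ℝ) (D e : Bool) : Matrix (Fin 4) (Fin 4) ℂ :=
  if e = D then blk 1 (Rrot (Real.pi/2)) 0 0
  else blk 0 0 (Rrot (x + Real.pi/2)) (Rrot x)

/-- full lift of the last gate -/
noncomputable def Lmat (x : ℝ) : Matrix (Fin 4) (Fin 4) ℂ :=
  blk 1 (Rrot (Real.pi/2)) (Rrot (x + Real.pi/2)) (Rrot x)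

/-- the unnormalised gate matrix -/
noncomputable def Ge (x : ℝ) : Matrix (Fin 2) (Fin 2) ℂ :=
  !![1, I; I * Complex.exp (I * x), Complex.exp (I * x)]

def bi : Bool → Fin 2 := fun b => if b then 1 else 0

lemma I_pow_3 : (I : ℂ) ^ 3 = -I := by
  rw [show (3:ℕ) = 2+1 from rfl, pow_succ, Complex.I_sq]; ring

lemma blk_mul (A B C D A' B' C' D' : Matrix (Fin 2) (Fin 2) ℂ) :
    blk A B C D * blk A' B' C' D' =
      blk (A*A'+B*C') (A*B'+B*D') (C*A'+D*C') (C*B'+D*D') := by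
  simp only [blk, Matrix.reindex_apply]
  rw [Matrix.submatrix_mul_equiv _ _ _ finSumFinEquiv.symm, Matrix.fromBlocks_multiply]

lemma blk_ext (A B C D : Matrix (Fin 2) (Fin 2) ℂ) :
    blk A B C D = !![A 0 0, A 0 1, B 0 0, B 0 1;
                     A 1 0, A 1 1, B 1 0, B 1 1;
                     C 0 0, C 0 1, D 0 0, D 0 1;
                     C 1 0, C 1 1, D 1 0, D 1 1] := by
  ext i j
  fin_cases i <;> fin_cases j <;>
    simp [blk, Matrix.fromBlocks] <;> rfl

lemma expIx (x : ℝ) : Complex.exp (I * x) = (Real.cos x : ℂ) + (Real.sin x : ℂ) * I := by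
  rw [mul_comm, Complex.exp_mul_I]
  simp [Complex.ofReal_cos, Complex.ofReal_sin]

lemma L_row (x : ℝ) (k0 : Bool) :
    uvec k0 ᵥ* Lmat x = Ge x (bi k0) 0 • uvec false + Ge x (bi k0) 1 • uvec true := by
  cases k0 <;>
  · funext i
    fin_cases i <;>
      simp [Lmat, blk_ext, Rrot, uvec, Ge, bi, vecMul, dotProduct, Fin.sum_univ_four,
        expIx, Real.cos_add, Real.sin_add, Matrix.vecHead, Matrix.vecTail]
    all_goals try ring_nf
    all_goals try simp only [I_pow_3, Complex.I_sq]
    all_goals ring_nf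

lemma gmat_row (x : ℝ) (D e k0 : Bool) :
    uvec k0 ᵥ* gmatx x D e =
      (if xor e k0 = D then (1:ℂ) else 0) •
        (Ge x (bi k0) 0 • uvec false + Ge x (bi k0) 1 • uvec true) := by
  cases k0 <;> cases e <;> cases D <;>
  · funext i
    fin_cases i <;>
      simp [gmatx, blk_ext, Rrot, uvec, Ge, bi, vecMul, dotProduct, Fin.sum_univ_four,
        expIx, Real.cos_add, Real.sin_add, Matrix.vecHead, Matrix.vecTail]
    all_goals try ring_nf
    all_goals try simp only [I_pow_3, Complex.I_sq]
    all_goals ring_nf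

/-- `M_n` special matrix equals the lift of step `n+1` times the generic step-`n` matrix. -/
lemma Mn_eq (n : ℕ) (φ : ℕ → ℝ) (D e : Bool) :
    Mmat n φ n D e = Lmat (φ (n+1)) * gmatx (φ n) D e := by
  rw [Mmat, if_pos rfl, Lmat, gmatx]
  by_cases h : e = D <;>
    simp [h, blk_mul, Matrix.mul_zero, Matrix.zero_mul, Matrix.mul_one, Matrix.one_mul]

/-- generic product -/
noncomputable def gp (n : ℕ) (φ : ℕ → ℝ) (jb kb : ℕ → Bool) :
    ℕ → Matrix (Fin 4) (Fin 4) ℂ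
  | 0 => 1
  | l + 1 => gmatx (φ (l+1)) (jb (n-l)) (kb (n-l)) * gp n φ jb kb l

lemma Mprod_eq_gp (n : ℕ) (φ : ℕ → ℝ) (jb kb : ℕ → Bool) (m : ℕ) (h : m < n) :
    Mprod n φ jb kb m = gp n φ jb kb m := by
  induction m with
  | zero => rfl
  | succ l ih =>
      rw [Mprod, gp, ih (by omega), Mmat, if_neg (by omega)]
      rfl

lemma gp_congr (n : ℕ) (φ : ℕ → ℝ) (jb kb kb' : ℕ → Bool) (m : ℕ)
    (h : ∀ l, l < m → kb (n-l) = kb' (n-l)) :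
    gp n φ jb kb m = gp n φ jb kb' m := by
  induction m with
  | zero => rfl
  | succ l ih =>
      rw [gp, gp, ih (fun l' hl' => h l' (by omega)), h l (by omega)]

lemma uv_dot (a b : Bool) : uvec a ⬝ᵥ vvec b = if a = b then (1:ℂ) else 0 := by
  cases a <;> cases b <;>
    simp [uvec, vvec, dotProduct, Fin.sum_univ_four]

lemma PR_apply (x : ℝ) (a b : Fin 2) :
    (phaseGate x * RXgate) a b = ((1 / Real.sqrt 2 : ℝ) : ℂ) * Ge x a b := by
  rw [phaseGate, RXgate, Matrix.mul_smul]
  rw [Matrix.smul_apply]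
  rw [Complex.real_smul]
  congr 1
  fin_cases a <;> fin_cases b <;>
    simp [Ge, Matrix.mul_apply, Fin.sum_univ_two] <;> ring

lemma xor_parity (a t : ℕ) (ht : 1 ≤ t) : (a ^^^ 2 ^ t) % 2 = a % 2 := by
  have h := Nat.testBit_xor a (2^t) 0
  rw [Nat.testBit_two_pow] at h
  rw [show decide (t = 0) = false from by simp [show t ≠ 0 by omega]] at h
  rw [Bool.xor_false] at h
  simp only [Nat.testBit_zero, decide_eq_decide] at h
  omega

lemma testBit_nf (k t l : ℕ) (ht : 1 ≤ t) :
    (if k % 2 = 1 then k ^^^ 2^t else k).testBit l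
      = xor (k.testBit l) (decide (t = l) && k.testBit 0) := by
  by_cases h : k % 2 = 1 <;>
    simp [h, Nat.testBit_xor, Nat.testBit_two_pow, Nat.testBit_zero]

lemma nf_lt {n : ℕ} (k : Fin (2^(n+1))) (t : ℕ) (ht : t ≤ n) :
    (if (k:ℕ) % 2 = 1 then (k:ℕ) ^^^ 2^t else (k:ℕ)) < 2^(n+1) := by
  split
  · exact Nat.xor_lt_two_pow k.2 (Nat.pow_lt_pow_right (by norm_num) (by omega))
  · exact k.2

lemma twoq_lt {n : ℕ} (a : ℕ) (ha : a < 2^(n+1)) (b : ℕ) (hb : b < 2) :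
    2 * (a / 2) + b < 2^(n+1) := by
  have h2 : 2^(n+1) = 2 * 2^n := by rw [pow_succ]; ring
  omega

lemma photon_mul {n : ℕ} (A : Matrix (Fin 2) (Fin 2) ℂ)
    (B : Matrix (Fin (2^(n+1))) (Fin (2^(n+1))) ℂ) (k j : Fin (2^(n+1))) :
    (photonGate n A * B) k j =
      ∑ b : Fin 2, A ⟨(k:ℕ) % 2, by omega⟩ b *
        B ⟨2 * ((k:ℕ) / 2) + (b:ℕ), twoq_lt _ k.2 _ b.2⟩ j := by
  rw [Matrix.mul_apply]
  have hq := k.2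
  set a0 : Fin (2^(n+1)) := ⟨2 * ((k:ℕ)/2), twoq_lt _ k.2 0 (by omega)⟩ with ha0
  set a1 : Fin (2^(n+1)) := ⟨2 * ((k:ℕ)/2) + 1, twoq_lt _ k.2 1 (by omega)⟩ with ha1
  have hne : a0 ≠ a1 := by
    simp only [ha0, ha1, Fin.mk.injEq, ne_eq]; omega
  have hvan : ∀ x ∈ Finset.univ, x ∉ ({a0, a1} : Finset (Fin (2^(n+1)))) →
      photonGate n A k x * B x j = 0 := by
    intro x _ hx
    simp only [Finset.mem_insert, Finset.mem_singleton, ha0, ha1] at hx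
    push_neg at hx
    obtain ⟨h1, h2⟩ := hx
    have hx2 : (k:ℕ)/2 ≠ (x:ℕ)/2 := by
      intro hdiv
      have hxx := x.2
      have hm : (x:ℕ) % 2 = 0 ∨ (x:ℕ) % 2 = 1 := by omega
      rcases hm with h | h
      · exact h1 (Fin.ext (by simp only [ha0]; omega))
      · exact h2 (Fin.ext (by simp only [ha1]; omega))
    rw [photonGate]
    simp [hx2]
  rw [← Finset.sum_subset (Finset.subset_univ ({a0, a1} : Finset (Fin (2^(n+1))))) hvan]
  rw [Finset.sum_pair hne, Fin.sum_univ_two]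
  congr 1
  · rw [photonGate]
    have hd : (k:ℕ)/2 = (a0:ℕ)/2 := by simp only [ha0]; omega
    rw [if_pos hd]
    have h02 : (a0:ℕ) % 2 = 0 := by simp only [ha0]; omega
    simp only [h02, ha0, Fin.val_zero, add_zero, Fin.mk_zero]
    rw [show (⟨2 * ((k:ℕ)/2) % 2, by omega⟩ : Fin 2) = 0 from Fin.ext (by rw [Fin.val_zero]; omega)]
  · rw [photonGate]
    have hd : (k:ℕ)/2 = (a1:ℕ)/2 := by simp only [ha1]; omega
    rw [if_pos hd]
    have h12 : (a1:ℕ) % 2 = 1 := by simp only [ha1]; omega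
    simp only [h12, ha1, Fin.val_one, Fin.mk_one]
    rw [show (⟨(2 * ((k:ℕ)/2) + 1) % 2, by omega⟩ : Fin 2) = 1 from Fin.ext (by rw [Fin.val_one]; omega)]

lemma cnot_mul {n : ℕ} (t : ℕ) (ht1 : 1 ≤ t) (ht2 : t ≤ n)
    (B : Matrix (Fin (2^(n+1))) (Fin (2^(n+1))) ℂ) (k j : Fin (2^(n+1))) :
    (cnotGate n t * B) k j =
      B ⟨if (k:ℕ) % 2 = 1 then (k:ℕ) ^^^ 2^t else (k:ℕ), nf_lt k t ht2⟩ j := by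
  rw [Matrix.mul_apply]
  set fk : Fin (2^(n+1)) := ⟨if (k:ℕ) % 2 = 1 then (k:ℕ) ^^^ 2^t else (k:ℕ), nf_lt k t ht2⟩
    with hfk
  have h0 : ∀ y ∈ Finset.univ, y ≠ fk → cnotGate n t k y * B y j = 0 := by
    intro y _ hy
    rw [cnotGate]
    rw [if_neg]
    · exact zero_mul _
    intro hk
    apply hy
    apply Fin.ext
    simp only [hfk]
    by_cases hy2 : (y:ℕ) % 2 = 1
    · rw [if_pos hy2] at hk
      have : (k:ℕ) % 2 = 1 := by rw [hk, xor_parity _ _ ht1]; exact hy2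
      rw [if_pos this, hk, xor_cancel_right]
    · rw [if_neg hy2] at hk
      have : ¬ (k:ℕ) % 2 = 1 := by rw [hk]; exact hy2
      rw [if_neg this, hk]
  have h1 : fk ∉ Finset.univ → cnotGate n t k fk * B fk j = 0 := by
    intro h; exact absurd (Finset.mem_univ fk) h
  have hs : ∑ y : Fin (2^(n+1)), cnotGate n t k y * B y j = cnotGate n t k fk * B fk j :=
    Finset.sum_eq_single fk h0 h1
  rw [hs, cnotGate]
  have hck : (k:ℕ) = (if (fk:ℕ) % 2 = 1 then (fk:ℕ) ^^^ 2^t else (fk:ℕ)) := by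
    simp only [hfk]
    by_cases hk2 : (k:ℕ) % 2 = 1
    · rw [if_pos hk2]
      rw [if_pos (by rw [xor_parity _ _ ht1]; exact hk2), xor_cancel_right]
    · rw [if_neg hk2, if_neg hk2]
  rw [if_pos hck, one_mul]

end Aux

lemma testBit0_two_mul_add (q b : ℕ) : (2*q+b).testBit 0 = decide (b % 2 = 1) := by
  rw [Nat.testBit_zero]
  exact decide_eq_decide.mpr (by omega)

lemma testBit_succ_two_mul_add (q b l : ℕ) (hb : b < 2) :
    (2*q+b).testBit (l+1) = q.testBit l := by
  rw [Nat.testBit_succ, show (2*q+b)/2 = q by omega]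

lemma fin_mk_mod_eq_bi (K : ℕ) (h : K % 2 < 2) :
    (⟨K % 2, h⟩ : Fin 2) = bi (K.testBit 0) := by
  rw [Nat.testBit_zero, bi]
  rcases (by omega : K % 2 = 0 ∨ K % 2 = 1) with hK | hK <;> simp only [hK] <;>
    first
      | exact Fin.ext (by norm_num)
      | (norm_num; exact Fin.ext (by norm_num))

open Classical in
lemma main_inv (n : ℕ) (φ : ℕ → ℝ) (j : Fin (2 ^ (n+1))) :
    ∀ m, m ≤ n → ∀ k : Fin (2 ^ (n+1)),
    Sprod n φ m k j =
      (if (∀ l, 1 ≤ l → l ≤ n - m → (k:ℕ).testBit l = (j:ℕ).testBit l) then (1:ℂ) else 0) *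
        (((1 / Real.sqrt 2 : ℝ) : ℂ) ^ m *
          (uvec ((k:ℕ).testBit 0) ⬝ᵥ
            (gp n φ (fun l => (j:ℕ).testBit l) (fun l => (k:ℕ).testBit l) m *ᵥ
              vvec ((j:ℕ).testBit 0)))) := by
  intro m
  induction m with
  | zero =>
    intro _ k
    rw [show Sprod n φ 0 = 1 from rfl, show gp n φ _ _ 0 = 1 from rfl]
    rw [Matrix.one_mulVec, uv_dot, pow_zero, one_mul, Matrix.one_apply]
    by_cases hkj : k = j
    · subst hkj; simp
    · rw [if_neg hkj]
      by_cases h1 : ∀ l, 1 ≤ l → l ≤ n - 0 → (k:ℕ).testBit l = (j:ℕ).testBit l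
      · by_cases h0 : (k:ℕ).testBit 0 = (j:ℕ).testBit 0
        · exfalso
          apply hkj
          apply Fin.ext
          apply Nat.eq_of_testBit_eq
          intro i
          match i with
          | 0 => exact h0
          | (i+1) =>
            by_cases hi : i+1 ≤ n
            · exact h1 (i+1) (by omega) (by omega)
            · have hj : (j:ℕ) < 2^(i+1) :=
                lt_of_lt_of_le j.2 (Nat.pow_le_pow_right (by norm_num) (by omega))
              have hk : (k:ℕ) < 2^(i+1) :=
                lt_of_lt_of_le k.2 (Nat.pow_le_pow_right (by norm_num) (by omega))
              rw [Nat.testBit_eq_false_of_lt hk, Nat.testBit_eq_false_of_lt hj]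
        · rw [if_pos h1, if_neg h0]; ring
      · rw [if_neg h1]; ring
  | succ m ih =>
    intro hm k
    have hmn : m < n := by omega
    have ht1 : 1 ≤ n - m := by omega
    have ht2 : n - m ≤ n := by omega
    have hstep : Sprod n φ (m+1) k j
        = (cnotGate n (n-m) * (photonGate n (phaseGate (φ (m+1)) * RXgate) * Sprod n φ m)) k j := by
      rw [show Sprod n φ (m+1) = stepGate n φ (m+1) * Sprod n φ m from rfl]
      rw [stepGate, if_pos (by omega : m+1 ≤ n)]
      rw [show n + 1 - (m+1) = n - m by omega, Matrix.mul_assoc]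
    rw [hstep, cnot_mul (n-m) ht1 ht2, photon_mul, Fin.sum_univ_two,
      ih (by omega), ih (by omega)]
    simp only [Fin.val_zero, Fin.val_one, add_zero]
    rw [PR_apply, PR_apply]
    set K := (k:ℕ) with hKdef
    set J := (j:ℕ) with hJdef
    set F : ℕ := if K % 2 = 1 then K ^^^ 2^(n-m) else K with hFdef
    have hpar : F % 2 = K % 2 := by
      rw [hFdef]; split
      · exact xor_parity _ _ ht1
      · rfl
    have hXbit' : ∀ b l, b < 2 → 1 ≤ l → (2*(F/2)+b).testBit l
        = (if l = n - m then xor (K.testBit l) (K.testBit 0) else K.testBit l) := by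
      intro b l hb hl
      obtain ⟨l', rfl⟩ : ∃ l', l = l'+1 := ⟨l-1, by omega⟩
      rw [testBit_succ_two_mul_add _ _ _ hb, ← Nat.testBit_succ, hFdef,
        testBit_nf K (n-m) (l'+1) ht1]
      by_cases hc : l'+1 = n-m
      · rw [if_pos hc, show decide (n-m = l'+1) = true from by simp [hc], Bool.true_and]
      · rw [if_neg hc, show decide (n-m = l'+1) = false from by simp; omega,
          Bool.false_and, Bool.xor_false]
    have hXbit0 : ∀ l, 1 ≤ l → (2*(F/2)).testBit l
        = (if l = n - m then xor (K.testBit l) (K.testBit 0) else K.testBit l) := by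
      intro l hl
      have := hXbit' 0 l (by omega) hl
      simpa using this
    have hu0 : (2*(F/2)).testBit 0 = false := by
      have := testBit0_two_mul_add (F/2) 0
      simpa using this
    have hu1 : (2*(F/2)+1).testBit 0 = true := by
      rw [testBit0_two_mul_add]; norm_num
    have hiff1 : (∀ l, 1 ≤ l → l ≤ n - m → (2*(F/2)+1).testBit l = J.testBit l) ↔
        ((∀ l, 1 ≤ l → l ≤ n - (m+1) → K.testBit l = J.testBit l) ∧
          xor (K.testBit (n-m)) (K.testBit 0) = J.testBit (n-m)) := by
      constructor
      · intro h
        refine ⟨fun l h1 h2 => ?_, ?_⟩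
        · have h' := h l h1 (by omega)
          rwa [hXbit' 1 l (by omega) h1, if_neg (by omega)] at h'
        · have h' := h (n-m) ht1 le_rfl
          rwa [hXbit' 1 (n-m) (by omega) ht1, if_pos rfl] at h'
      · rintro ⟨hA, hB⟩ l h1 h2
        rw [hXbit' 1 l (by omega) h1]
        by_cases hc : l = n-m
        · rw [if_pos hc, hc]; exact hB
        · rw [if_neg hc]; exact hA l h1 (by omega)
    have hiff0 : (∀ l, 1 ≤ l → l ≤ n - m → (2*(F/2)).testBit l = J.testBit l) ↔
        ((∀ l, 1 ≤ l → l ≤ n - (m+1) → K.testBit l = J.testBit l) ∧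
          xor (K.testBit (n-m)) (K.testBit 0) = J.testBit (n-m)) := by
      constructor
      · intro h
        refine ⟨fun l h1 h2 => ?_, ?_⟩
        · have h' := h l h1 (by omega)
          rwa [hXbit0 l h1, if_neg (by omega)] at h'
        · have h' := h (n-m) ht1 le_rfl
          rwa [hXbit0 (n-m) ht1, if_pos rfl] at h'
      · rintro ⟨hA, hB⟩ l h1 h2
        rw [hXbit0 l h1]
        by_cases hc : l = n-m
        · rw [if_pos hc, hc]; exact hB
        · rw [if_neg hc]; exact hA l h1 (by omega)
    have hgp1 : gp n φ (fun l => J.testBit l) (fun l => (2*(F/2)+1).testBit l) m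
        = gp n φ (fun l => J.testBit l) (fun l => K.testBit l) m := by
      apply gp_congr
      intro l hl
      rw [hXbit' 1 (n-l) (by omega) (by omega), if_neg (by omega)]
    have hgp0 : gp n φ (fun l => J.testBit l) (fun l => (2*(F/2)).testBit l) m
        = gp n φ (fun l => J.testBit l) (fun l => K.testBit l) m := by
      apply gp_congr
      intro l hl
      rw [hXbit0 (n-l) (by omega), if_neg (by omega)]
    rw [hgp0, hgp1]
    rw [hu0, hu1, fin_mk_mod_eq_bi,
      show F.testBit 0 = K.testBit 0 by rw [Nat.testBit_zero, Nat.testBit_zero, hpar]]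
    -- right-hand side
    rw [show gp n φ (fun l => J.testBit l) (fun l => K.testBit l) (m+1)
        = gmatx (φ (m+1)) (J.testBit (n-m)) (K.testBit (n-m)) *
          gp n φ (fun l => J.testBit l) (fun l => K.testBit l) m from rfl]
    rw [← Matrix.mulVec_mulVec,
      Matrix.dotProduct_mulVec (uvec (K.testBit 0))
        (gmatx (φ (m+1)) (J.testBit (n-m)) (K.testBit (n-m))), gmat_row]
    simp only [smul_dotProduct, add_dotProduct, smul_eq_mul]
    by_cases hP : ∀ l, 1 ≤ l → l ≤ n - (m+1) → K.testBit l = J.testBit l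
    · by_cases hQ : (K.testBit (n-m) ^^ K.testBit 0) = J.testBit (n-m)
      · rw [if_pos (hiff0.mpr ⟨hP, hQ⟩), if_pos (hiff1.mpr ⟨hP, hQ⟩), if_pos hP, if_pos hQ]; ring
      · rw [if_neg (fun h => hQ (hiff0.mp h).2), if_neg (fun h => hQ (hiff1.mp h).2), if_pos hP,
          if_neg hQ]; ring
    · rw [if_neg (fun h => hP (hiff0.mp h).1), if_neg (fun h => hP (hiff1.mp h).1), if_neg hP]; ring

/-- For all indices `k = Σ_l k_l 2^l` and `j = Σ_l j_l 2^l` with bits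
`k_l, j_l ∈ {0,1}`, the matrix entry of `U_Φ` satisfies
`⟨k| U_Φ |j⟩ = 2^{−(n+1)/2} · u_{k₀}ᵀ · M_{n,j₁,k₁} · M_{n−1,j₂,k₂} ⋯ M_{1,j_n,k_n} · v_{j₀}`. -/
theorem stmt5 (n : ℕ) (hn : 1 ≤ n) (φ : ℕ → ℝ) (k j : Fin (2 ^ (n + 1))) :
    Uphi n φ k j =
      ((1 / Real.sqrt 2 : ℝ) ^ (n + 1) : ℂ) *
        (uvec ((k : ℕ).testBit 0) ⬝ᵥ
          (Mprod n φ (fun l => (j : ℕ).testBit l) (fun l => (k : ℕ).testBit l) n *ᵥ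
            vvec ((j : ℕ).testBit 0))) := by
  obtain ⟨n', rfl⟩ : ∃ n', n = n' + 1 := ⟨n - 1, by omega⟩
  have hU : Uphi (n'+1) φ k j
      = (photonGate (n'+1) (phaseGate (φ ((n'+1)+1)) * RXgate) * Sprod (n'+1) φ (n'+1)) k j := by
    rw [Uphi, show Sprod (n'+1) φ ((n'+1)+1) = stepGate (n'+1) φ ((n'+1)+1) * Sprod (n'+1) φ (n'+1) from rfl,
      stepGate, if_neg (by omega), one_mul]
  rw [hU, photon_mul, Fin.sum_univ_two, main_inv (n'+1) φ j (n'+1) le_rfl,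
    main_inv (n'+1) φ j (n'+1) le_rfl]
  simp only [Fin.val_zero, Fin.val_one, add_zero]
  have hvac0 : ∀ l, 1 ≤ l → l ≤ (n'+1) - (n'+1) → (2*((k:ℕ)/2)).testBit l = (j:ℕ).testBit l :=
    fun l h1 h2 => absurd (h1.trans h2) (by omega)
  have hvac1 : ∀ l, 1 ≤ l → l ≤ (n'+1) - (n'+1) → (2*((k:ℕ)/2)+1).testBit l = (j:ℕ).testBit l :=
    fun l h1 h2 => absurd (h1.trans h2) (by omega)
  rw [if_pos hvac0, if_pos hvac1]
  have hb0 : (2*((k:ℕ)/2)).testBit 0 = false := by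
    have := testBit0_two_mul_add ((k:ℕ)/2) 0
    simpa using this
  have hb1 : (2*((k:ℕ)/2)+1).testBit 0 = true := by
    rw [testBit0_two_mul_add]; norm_num
  have hbl : ∀ b l, b < 2 → (2*((k:ℕ)/2)+b).testBit (l+1) = (k:ℕ).testBit (l+1) := by
    intro b l hb
    rw [testBit_succ_two_mul_add _ _ _ hb, ← Nat.testBit_succ]
  have hbl0 : ∀ l, (2*((k:ℕ)/2)).testBit (l+1) = (k:ℕ).testBit (l+1) := by
    intro l
    have := hbl 0 l (by omega)
    simpa using this
  have hg1 : gp (n'+1) φ (fun l => (j:ℕ).testBit l) (fun l => (2*((k:ℕ)/2)+1).testBit l) (n'+1)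
      = gp (n'+1) φ (fun l => (j:ℕ).testBit l) (fun l => (k:ℕ).testBit l) (n'+1) := by
    apply gp_congr
    intro l hl
    obtain ⟨l', hl'⟩ : ∃ l', (n'+1) - l = l'+1 := ⟨(n'+1)-l-1, by omega⟩
    rw [hl', hbl 1 l' (by omega)]
  have hg0 : gp (n'+1) φ (fun l => (j:ℕ).testBit l) (fun l => (2*((k:ℕ)/2)).testBit l) (n'+1)
      = gp (n'+1) φ (fun l => (j:ℕ).testBit l) (fun l => (k:ℕ).testBit l) (n'+1) := by
    apply gp_congr
    intro l hl
    obtain ⟨l', hl'⟩ : ∃ l', (n'+1) - l = l'+1 := ⟨(n'+1)-l-1, by omega⟩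
    rw [hl', hbl0 l']
  rw [hg0, hg1]
  simp only [hb0, hb1]
  rw [PR_apply, PR_apply, fin_mk_mod_eq_bi]
  have hM : Mprod (n'+1) φ (fun l => (j:ℕ).testBit l) (fun l => (k:ℕ).testBit l) (n'+1)
      = Lmat (φ ((n'+1)+1)) *
          gp (n'+1) φ (fun l => (j:ℕ).testBit l) (fun l => (k:ℕ).testBit l) (n'+1) := by
    rw [show Mprod (n'+1) φ (fun l => (j:ℕ).testBit l) (fun l => (k:ℕ).testBit l) (n'+1)
        = Mmat (n'+1) φ (n'+1) ((j:ℕ).testBit ((n'+1)-n')) ((k:ℕ).testBit ((n'+1)-n')) *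
          Mprod (n'+1) φ (fun l => (j:ℕ).testBit l) (fun l => (k:ℕ).testBit l) n' from rfl]
    rw [show gp (n'+1) φ (fun l => (j:ℕ).testBit l) (fun l => (k:ℕ).testBit l) (n'+1)
        = gmatx (φ (n'+1)) ((j:ℕ).testBit ((n'+1)-n')) ((k:ℕ).testBit ((n'+1)-n')) *
          gp (n'+1) φ (fun l => (j:ℕ).testBit l) (fun l => (k:ℕ).testBit l) n' from rfl]
    rw [Mn_eq, Mprod_eq_gp _ _ _ _ n' (by omega), Matrix.mul_assoc]
  rw [hM, ← Matrix.mulVec_mulVec,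
    Matrix.dotProduct_mulVec (uvec ((k:ℕ).testBit 0)) (Lmat (φ ((n'+1)+1))), L_row]
  simp only [add_dotProduct, smul_dotProduct, smul_eq_mul]
  ring
end

section
/- Every entry of the matrix of U_Φ in the computational basis has modulus exactly 2^{−(n+1)/2}; equivalently, 2^{(n+1)/2}·U_Φ is a complex Hadamard matrix (a unitary multiple whose entries all have unit modulus). -/
open Complex Matrix

noncomputable def Mgate (x : ℝ) : Matrix (Fin 2) (Fin 2) ℂ := phaseGate x * RXgate

lemma Mgate_eq (x : ℝ) :
    Mgate x = (1 / Real.sqrt 2 : ℝ) • !![1, I; Complex.exp (I * x) * I, Complex.exp (I * x)] := by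
  ext i j
  fin_cases i <;> fin_cases j <;>
    simp [Mgate, phaseGate, RXgate, Matrix.mul_apply, Fin.sum_univ_two] <;> ring

lemma abs_exp_I_mul (x : ℝ) : ‖Complex.exp (I * x)‖ = 1 := by
  rw [Complex.norm_exp]
  simp

noncomputable def ent (x : ℝ) (r c : ℕ) : ℂ :=
  Mgate x ⟨r % 2, Nat.mod_lt _ (by norm_num)⟩ ⟨c % 2, Nat.mod_lt _ (by norm_num)⟩

lemma abs_ent (x : ℝ) (r c : ℕ) : ‖ent x r c‖ = 1 / Real.sqrt 2 := by
  have h2 : (0:ℝ) ≤ 1 / Real.sqrt 2 := by positivity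
  rcases Nat.mod_two_eq_zero_or_one r with hr | hr <;>
    rcases Nat.mod_two_eq_zero_or_one c with hc | hc <;>
      simp [ent, Mgate_eq, hr, hc, _root_.map_mul, abs_exp_I_mul, norm_smul, Real.norm_eq_abs,
        _root_.abs_of_nonneg h2]

lemma Mgate_unitary (x : ℝ) : Mgate x ∈ Matrix.unitaryGroup (Fin 2) ℂ := by
  rw [Matrix.mem_unitaryGroup_iff]
  have hs : ((Real.sqrt 2 : ℝ) : ℂ) * ((Real.sqrt 2 : ℝ) : ℂ) = 2 := by
    rw [← Complex.ofReal_mul, Real.mul_self_sqrt (by norm_num)]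
    norm_num
  have hconj : (starRingEnd ℂ) (I * (x:ℂ)) = -(I * x) := by
    simp [_root_.map_mul, Complex.conj_I, Complex.conj_ofReal]
  have he : Complex.exp (I * x) * Complex.exp (-(I * x)) = 1 := by
    rw [← Complex.exp_add]
    simp
  have he2 : Complex.exp (I * x) * (starRingEnd ℂ) (Complex.exp (I * x)) = 1 := by
    rw [← Complex.exp_conj, hconj]
    exact he
  have hsne : ((Real.sqrt 2 : ℝ) : ℂ) ≠ 0 := by
    simpa using (Real.sqrt_ne_zero' (x := 2)).mpr (by norm_num)
  ext i j
  fin_cases i <;> fin_cases j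
  all_goals
    simp only [Mgate_eq, Matrix.mul_apply, Fin.sum_univ_two, Matrix.star_apply,
      Matrix.one_apply, Matrix.smul_apply, Matrix.conjTranspose_apply,
      Matrix.cons_val', Matrix.cons_val_zero, Matrix.cons_val_one, Matrix.head_cons,
      Matrix.head_fin_const, Matrix.empty_val', Matrix.cons_val_fin_one]
  all_goals
    simp only [Complex.star_def, _root_.map_mul, Complex.conj_I, Complex.conj_ofReal, hconj,
      ← Complex.exp_conj]
  all_goals norm_num
  all_goals field_simp
  all_goals ring_nf
  all_goals try simp only [Complex.I_sq]
  all_goals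
    first
    | rfl
    | linear_combination (2:ℂ) * he
    | linear_combination hs
    | linear_combination -(2:ℂ) * he
    | linear_combination he * hs
    | linear_combination -hs
    | linear_combination 2 * he2 - hs
    | linear_combination (2*((Real.sqrt 2 : ℝ):ℂ)^2) * he2 - (((Real.sqrt 2 : ℝ):ℂ)^2) * hs
    | skip


section bits

def nbit (i x : ℕ) : ℕ := x / 2 ^ i % 2

lemma nbit_lt_two (i x : ℕ) : nbit i x < 2 := Nat.mod_lt _ (by norm_num)

lemma nbit_testBit (i x : ℕ) : nbit i x = (x.testBit i).toNat := by
  rw [Nat.testBit_eq_decide_div_mod_eq]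
  rcases Nat.mod_two_eq_zero_or_one (x / 2 ^ i) with h | h <;> simp [nbit, h]

lemma nbit_xor (i x y : ℕ) : nbit i (x ^^^ y) = nbit i x ^^^ nbit i y := by
  simp only [nbit_testBit, Nat.testBit_xor]
  cases x.testBit i <;> cases y.testBit i <;> simp

lemma nbit_two_pow (i t : ℕ) : nbit i (2 ^ t) = if t = i then 1 else 0 := by
  simp only [nbit_testBit, Nat.testBit_two_pow]
  split <;> simp_all

lemma nbit_zero (x : ℕ) : nbit 0 x = x % 2 := by simp [nbit]

lemma nbit_succ (i x : ℕ) : nbit (i + 1) x = nbit i (x / 2) := by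
  rw [nbit, nbit, Nat.div_div_eq_div_mul, pow_succ']

lemma eq_of_nbit_eq {N x y : ℕ} (hx : x < 2 ^ N) (hy : y < 2 ^ N)
    (h : ∀ i < N, nbit i x = nbit i y) : x = y := by
  apply Nat.eq_of_testBit_eq
  intro i
  by_cases hi : i < N
  · have := h i hi
    rw [nbit_testBit, nbit_testBit] at this
    cases htx : x.testBit i <;> cases hty : y.testBit i <;> simp_all
  · rw [Nat.testBit_eq_false_of_lt
      (lt_of_lt_of_le hx (Nat.pow_le_pow_right (by norm_num) (by omega))),
      Nat.testBit_eq_false_of_lt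
      (lt_of_lt_of_le hy (Nat.pow_le_pow_right (by norm_num) (by omega)))]

lemma xor_left_cancel' (a b : ℕ) : a ^^^ (a ^^^ b) = b := by
  rw [← Nat.xor_assoc, Nat.xor_self, Nat.zero_xor]

/-- the bit carried by the photon just after step `i`. -/
def bfun (n k j : ℕ) : ℕ → ℕ
  | 0 => j % 2
  | i + 1 => nbit (n - i) k ^^^ nbit (n - i) j

lemma bfun_lt_two (n k j i : ℕ) : bfun n k j i < 2 := by
  cases i with
  | zero => exact Nat.mod_lt _ (by norm_num)
  | succ i =>
    show nbit (n - i) k ^^^ nbit (n - i) j < 2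
    have := Nat.xor_lt_two_pow (n := 1) (nbit_lt_two (n - i) k) (nbit_lt_two (n - i) j)
    simpa using this

/-- bits `1,…,n-m` (the not-yet-written detector bits) agree. -/
def condLow (n m k j : ℕ) : Prop := ∀ i, 1 ≤ i → i ≤ n - m → nbit i k = nbit i j

end bits

section struct2
variable {n : ℕ}

lemma two_pow_succ (n : ℕ) : 2 ^ (n + 1) = 2 * 2 ^ n := by rw [pow_succ]; ring

/-- the natural-number CNOT map. -/
def cfn (t x : ℕ) : ℕ := if x % 2 = 1 then x ^^^ 2 ^ t else x

lemma cfn_lt {t x : ℕ} (ht : t ≤ n) (hx : x < 2 ^ (n + 1)) : cfn t x < 2 ^ (n + 1) := by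
  unfold cfn
  split
  · exact Nat.xor_lt_two_pow hx
      (lt_of_le_of_lt (Nat.pow_le_pow_right (by norm_num) ht)
        (by rw [two_pow_succ]; omega))
  · exact hx

lemma xor_two_pow_mod_two' {t : ℕ} (ht : 1 ≤ t) (x : ℕ) : (x ^^^ 2 ^ t) % 2 = x % 2 := by
  have h := nbit_xor 0 x (2 ^ t)
  rw [nbit_two_pow] at h
  simp only [nbit_zero] at h
  rw [h, if_neg (by omega), Nat.xor_zero]

lemma cfn_mod_two {t : ℕ} (ht : 1 ≤ t) (x : ℕ) : cfn t x % 2 = x % 2 := by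
  unfold cfn
  split
  · exact xor_two_pow_mod_two' ht x
  · rfl

lemma cfn_invol {t : ℕ} (ht : 1 ≤ t) (x : ℕ) : cfn t (cfn t x) = x := by
  rcases Nat.mod_two_eq_zero_or_one x with h | h
  · simp [cfn, h]
  · have h1 : cfn t x = x ^^^ 2 ^ t := by simp [cfn, h]
    have h2 : (x ^^^ 2 ^ t) % 2 = 1 := by rw [xor_two_pow_mod_two' ht]; exact h
    rw [h1]
    unfold cfn
    rw [if_pos h2, Nat.xor_assoc, Nat.xor_self, Nat.xor_zero]

lemma nbit_cfn_ne {t i : ℕ} (ht : 1 ≤ t) (hi : i ≠ t) (K : ℕ) :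
    nbit i (cfn t K) = nbit i K := by
  unfold cfn
  split
  · rw [nbit_xor, nbit_two_pow, if_neg (fun h => hi h.symm), Nat.xor_zero]
  · rfl

lemma nbit_cfn_self (t K : ℕ) : nbit t (cfn t K) = nbit t K ^^^ K % 2 := by
  unfold cfn
  rcases Nat.mod_two_eq_zero_or_one K with h | h
  · rw [h, if_neg (by omega), Nat.xor_zero]
  · rw [h, if_pos rfl, nbit_xor, nbit_two_pow, if_pos rfl]

/-- CNOT map as a `Fin` map. -/
def cfin (t : ℕ) (ht : t ≤ n) (k : Fin (2 ^ (n + 1))) : Fin (2 ^ (n + 1)) :=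
  ⟨cfn t k, cfn_lt ht k.isLt⟩

lemma cnot_apply {t : ℕ} (ht : t ≤ n) (k j : Fin (2 ^ (n + 1))) :
    cnotGate n t k j = if k = cfin t ht j then 1 else 0 := by
  unfold cnotGate cfin cfn
  congr 1
  simp [Fin.ext_iff]

lemma cnot_mul_apply {t : ℕ} (ht1 : 1 ≤ t) (ht : t ≤ n)
    (X : Matrix (Fin (2 ^ (n + 1))) (Fin (2 ^ (n + 1))) ℂ) (k j : Fin (2 ^ (n + 1))) :
    (cnotGate n t * X) k j = X (cfin t ht k) j := by
  rw [Matrix.mul_apply]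
  rw [Finset.sum_eq_single (cfin t ht k)]
  · rw [cnot_apply ht, if_pos, one_mul]
    apply Fin.ext
    show (k : ℕ) = cfn t (cfn t k)
    rw [cfn_invol ht1]
  · intro c _ hc
    rw [cnot_apply ht, if_neg, zero_mul]
    intro hkc
    apply hc
    apply Fin.ext
    show (c : ℕ) = cfn t k
    have : (k : ℕ) = cfn t c := by rw [hkc]; rfl
    rw [this, cfn_invol ht1]
  · intro h
    exact absurd (Finset.mem_univ _) h

lemma photonGate_apply (A : Matrix (Fin 2) (Fin 2) ℂ) (k j : Fin (2 ^ (n + 1))) :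
    photonGate n A k j = if (k : ℕ) / 2 = (j : ℕ) / 2
      then A ⟨(k : ℕ) % 2, by omega⟩ ⟨(j : ℕ) % 2, by omega⟩ else 0 := rfl

lemma photon_mul_apply (A : Matrix (Fin 2) (Fin 2) ℂ)
    (X : Matrix (Fin (2 ^ (n + 1))) (Fin (2 ^ (n + 1))) ℂ) (k j : Fin (2 ^ (n + 1))) :
    (photonGate n A * X) k j =
      A ⟨(k : ℕ) % 2, by omega⟩ 0 * X ⟨2 * ((k : ℕ) / 2), by
          have := two_pow_succ n; have := k.isLt; omega⟩ j +
      A ⟨(k : ℕ) % 2, by omega⟩ 1 * X ⟨2 * ((k : ℕ) / 2) + 1, by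
          have := two_pow_succ n; have := k.isLt; omega⟩ j := by
  have hp := two_pow_succ n
  have hk := k.isLt
  have hb0 : 2 * ((k : ℕ) / 2) < 2 ^ (n + 1) := by omega
  have hb1 : 2 * ((k : ℕ) / 2) + 1 < 2 ^ (n + 1) := by omega
  have h01 : (⟨2 * ((k : ℕ) / 2), hb0⟩ : Fin (2 ^ (n + 1))) ≠ ⟨2 * ((k : ℕ) / 2) + 1, hb1⟩ := by
    rw [Fin.ne_iff_vne]
    simp only [Fin.val_mk]
    omega
  have hzero : ∀ c ∈ Finset.univ, c ≠ (⟨2 * ((k : ℕ) / 2), hb0⟩ : Fin (2 ^ (n + 1))) ∧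
      c ≠ (⟨2 * ((k : ℕ) / 2) + 1, hb1⟩ : Fin (2 ^ (n + 1))) →
      photonGate n A k c * X c j = 0 := by
    intro c _ hc
    have hne : (k : ℕ) / 2 ≠ (c : ℕ) / 2 := by
      intro h
      rcases hc with ⟨hc1, hc2⟩
      rw [Fin.ne_iff_vne] at hc1 hc2
      simp only [Fin.val_mk] at hc1 hc2
      omega
    rw [photonGate_apply, if_neg hne, zero_mul]
  rw [Matrix.mul_apply,
    Finset.sum_eq_add (⟨2 * ((k : ℕ) / 2), hb0⟩ : Fin (2 ^ (n + 1)))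
      ⟨2 * ((k : ℕ) / 2) + 1, hb1⟩ h01 hzero
      (fun h => absurd (Finset.mem_univ _) h) (fun h => absurd (Finset.mem_univ _) h)]
  have e0 : photonGate n A k ⟨2 * ((k : ℕ) / 2), hb0⟩ = A ⟨(k : ℕ) % 2, by omega⟩ 0 := by
    rw [photonGate_apply, if_pos (by simp only [Fin.val_mk]; omega)]
    congr 1
    rw [Fin.ext_iff]
    simp only [Fin.val_mk, Fin.val_zero, Fin.val_one]
    omega
  have e1 : photonGate n A k ⟨2 * ((k : ℕ) / 2) + 1, hb1⟩ = A ⟨(k : ℕ) % 2, by omega⟩ 1 := by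
    rw [photonGate_apply, if_pos (by simp only [Fin.val_mk]; omega)]
    congr 1
    rw [Fin.ext_iff]
    simp only [Fin.val_mk, Fin.val_zero, Fin.val_one]
    omega
  rw [e0, e1]



lemma finmk_eq_zero {x : ℕ} (h : x < 2) (hx : x = 0) : (⟨x, h⟩ : Fin 2) = 0 := by
  subst hx; rfl

lemma finmk_eq_one {x : ℕ} (h : x < 2) (hx : x = 1) : (⟨x, h⟩ : Fin 2) = 1 := by
  subst hx; rfl

lemma photonGate_apply' (A : Matrix (Fin 2) (Fin 2) ℂ) (k j : Fin (2 ^ (n + 1)))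
    (h : (k : ℕ) / 2 = (j : ℕ) / 2) (r c : Fin 2) (hr : (k : ℕ) % 2 = (r : ℕ))
    (hc : (j : ℕ) % 2 = (c : ℕ)) : photonGate n A k j = A r c := by
  rw [photonGate_apply, if_pos h]
  congr 1 <;> apply Fin.ext <;> simp only [Fin.val_mk] <;> omega

lemma photon_mul_s6 (A B : Matrix (Fin 2) (Fin 2) ℂ) :
    photonGate n A * photonGate n B = photonGate n (A * B) := by
  ext k j
  rw [photon_mul_apply, photonGate_apply (A * B)]
  have h0 : (2 * ((k : ℕ) / 2)) / 2 = (k : ℕ) / 2 := by omega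
  have h1 : (2 * ((k : ℕ) / 2) + 1) / 2 = (k : ℕ) / 2 := by omega
  by_cases h : (k : ℕ) / 2 = (j : ℕ) / 2
  · rw [if_pos h, Matrix.mul_apply, Fin.sum_univ_two]
    rw [photonGate_apply' B _ j (by simp only [Fin.val_mk]; omega) 0 ⟨(j : ℕ) % 2, by omega⟩
        (by simp only [Fin.val_mk]; omega) rfl,
      photonGate_apply' B _ j (by simp only [Fin.val_mk]; omega) 1 ⟨(j : ℕ) % 2, by omega⟩
        (by simp only [Fin.val_mk]; omega) rfl]
  · rw [if_neg h]
    rw [photonGate_apply, photonGate_apply, if_neg (by simp only [Fin.val_mk]; omega),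
      if_neg (by simp only [Fin.val_mk]; omega)]
    ring

lemma photon_one : photonGate n 1 = 1 := by
  ext k j
  simp only [photonGate_apply, Matrix.one_apply]
  by_cases h : k = j
  · subst h
    simp
  · rw [if_neg h]
    by_cases h2 : (k : ℕ) / 2 = (j : ℕ) / 2
    · rw [if_pos h2, if_neg]
      intro hh
      apply h
      apply Fin.ext
      have := Fin.ext_iff.mp hh
      simp only [Fin.val_mk] at this
      omega
    · rw [if_neg h2]

lemma photon_conjTranspose (A : Matrix (Fin 2) (Fin 2) ℂ) :
    (photonGate n A)ᴴ = photonGate n Aᴴ := by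
  ext k j
  rw [Matrix.conjTranspose_apply, photonGate_apply, photonGate_apply]
  by_cases h : (k : ℕ) / 2 = (j : ℕ) / 2
  · rw [if_pos h, if_pos h.symm, Matrix.conjTranspose_apply]
  · rw [if_neg h, if_neg (Ne.symm h), star_zero]

lemma photon_unitary {A : Matrix (Fin 2) (Fin 2) ℂ} (hA : A ∈ Matrix.unitaryGroup (Fin 2) ℂ) :
    photonGate n A ∈ Matrix.unitaryGroup (Fin (2 ^ (n + 1))) ℂ := by
  rw [Matrix.mem_unitaryGroup_iff] at hA ⊢
  show photonGate n A * (photonGate n A)ᴴ = 1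
  rw [photon_conjTranspose, photon_mul_s6]
  rw [show A * Aᴴ = 1 from hA, photon_one]

lemma cnot_conjTranspose {t : ℕ} (ht1 : 1 ≤ t) (ht : t ≤ n) :
    (cnotGate n t)ᴴ = cnotGate n t := by
  ext k j
  rw [Matrix.conjTranspose_apply, cnot_apply ht, cnot_apply ht]
  by_cases h : j = cfin t ht k
  · rw [if_pos h, if_pos, star_one]
    apply Fin.ext
    show (k : ℕ) = cfn t (j : ℕ)
    rw [h]
    show _ = cfn t (cfn t (k : ℕ))
    rw [cfn_invol ht1]
  · rw [if_neg h, if_neg, star_zero]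
    intro hk
    apply h
    apply Fin.ext
    show (j : ℕ) = cfn t (k : ℕ)
    have : (k : ℕ) = cfn t (j : ℕ) := by rw [hk]; rfl
    rw [this, cfn_invol ht1]

lemma cnot_unitary {t : ℕ} (ht1 : 1 ≤ t) (ht : t ≤ n) :
    cnotGate n t ∈ Matrix.unitaryGroup (Fin (2 ^ (n + 1))) ℂ := by
  rw [Matrix.mem_unitaryGroup_iff]
  show cnotGate n t * (cnotGate n t)ᴴ = 1
  rw [cnot_conjTranspose ht1 ht]
  ext k j
  rw [cnot_mul_apply ht1 ht, cnot_apply ht, Matrix.one_apply]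
  by_cases h : k = j
  · subst h
    rw [if_pos rfl, if_pos rfl]
  · rw [if_neg h, if_neg]
    intro hk
    apply h
    apply Fin.ext
    have : cfn t (k : ℕ) = cfn t (j : ℕ) := Fin.ext_iff.mp hk
    have h2 := congrArg (cfn t) this
    rwa [cfn_invol ht1, cfn_invol ht1] at h2


section transfer
variable {n m b K j : ℕ}

lemma nbit_shift (i x b : ℕ) (hb : b < 2) : nbit (i + 1) (2 * (x / 2) + b) = nbit (i + 1) x := by
  rw [nbit_succ, nbit_succ]
  congr 1
  omega

/-- transfer of `bfun` from `2*(cfn (n-m) K / 2) + b` to `K`. -/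
lemma bfun_transfer (hm : m + 1 ≤ n) (hb : b < 2) :
    ∀ i ≤ m, bfun n (2 * (cfn (n - m) K / 2) + b) j i = bfun n K j i := by
  intro i hi
  cases i with
  | zero => rfl
  | succ i =>
    show nbit (n - i) _ ^^^ _ = nbit (n - i) K ^^^ _
    congr 1
    have h1 : n - i = (n - i - 1) + 1 := by omega
    rw [h1, nbit_shift _ _ _ hb, ← h1]
    exact nbit_cfn_ne (by omega) (by omega) K

/-- same transfer when no CNOT is applied (final step). -/
lemma bfun_transfer' (hb : b < 2) :
    ∀ i ≤ n, bfun n (2 * (K / 2) + b) j i = bfun n K j i := by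
  intro i hi
  cases i with
  | zero => rfl
  | succ i =>
    show nbit (n - i) _ ^^^ _ = nbit (n - i) K ^^^ _
    congr 1
    have h1 : n - i = (n - i - 1) + 1 := by omega
    rw [h1, nbit_shift _ _ _ hb]

lemma cond_transfer (hm : m + 1 ≤ n) (hb : b < 2) :
    condLow n m (2 * (cfn (n - m) K / 2) + b) j ↔
      (condLow n (m + 1) K j ∧ K % 2 = bfun n K j (m + 1)) := by
  have ht1 : 1 ≤ n - m := by omega
  have hc : ∀ i, 1 ≤ i → nbit i (2 * (cfn (n - m) K / 2) + b) = nbit i (cfn (n - m) K) := by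
    intro i hi
    have h1 : i = (i - 1) + 1 := by omega
    rw [h1, nbit_shift _ _ _ hb]
  have hb2 : bfun n K j (m + 1) = nbit (n - m) K ^^^ nbit (n - m) j := rfl
  constructor
  · intro H
    refine ⟨fun i hi1 hi2 => ?_, ?_⟩
    · have := H i hi1 (by omega)
      rw [hc i hi1, nbit_cfn_ne ht1 (by omega) K] at this
      exact this
    · have := H (n - m) ht1 (le_refl _)
      rw [hc _ ht1, nbit_cfn_self] at this
      rw [hb2, ← this, xor_left_cancel']
  · rintro ⟨H1, H2⟩
    intro i hi1 hi2
    rw [hc i hi1]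
    by_cases hit : i = n - m
    · subst hit
      rw [nbit_cfn_self, H2, hb2, ← Nat.xor_assoc, Nat.xor_self, Nat.zero_xor]
    · rw [nbit_cfn_ne ht1 hit K]
      exact H1 i hi1 (by omega)

end transfer

open scoped Classical in
theorem Sprod_apply (n : ℕ) (φ : ℕ → ℝ) (m : ℕ) : m ≤ n → ∀ k j : Fin (2 ^ (n + 1)),
    Sprod n φ m k j =
      if condLow n m (k : ℕ) (j : ℕ) ∧ (k : ℕ) % 2 = bfun n (k : ℕ) (j : ℕ) m
      then ∏ i ∈ Finset.range m,
        ent (φ (i + 1)) (bfun n (k : ℕ) (j : ℕ) (i + 1)) (bfun n (k : ℕ) (j : ℕ) i)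
      else 0 := by
  induction m with
  | zero =>
    intro _ k j
    show (1 : Matrix (Fin (2 ^ (n + 1))) (Fin (2 ^ (n + 1))) ℂ) k j = _
    rw [Matrix.one_apply]
    by_cases h : k = j
    · subst h
      rw [if_pos rfl, if_pos ⟨fun i _ _ => rfl, rfl⟩, Finset.range_zero, Finset.prod_empty]
    · rw [if_neg h, if_neg]
      rintro ⟨h1, h2⟩
      apply h
      apply Fin.ext
      apply eq_of_nbit_eq k.isLt j.isLt
      intro i hi
      rcases Nat.eq_zero_or_pos i with h0 | h0
      · subst h0
        rw [nbit_zero, nbit_zero]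
        exact h2
      · exact h1 i h0 (by omega)
  | succ m ih =>
    intro hm k j
    have hm' : m ≤ n := by omega
    have ht1 : 1 ≤ n - m := by omega
    have htn : n - m ≤ n := by omega
    show (stepGate n φ (m + 1) * Sprod n φ m) k j = _
    rw [stepGate, if_pos (show m + 1 ≤ n from hm),
      show n + 1 - (m + 1) = n - m from by omega, Matrix.mul_assoc,
      cnot_mul_apply ht1 htn, photon_mul_apply]
    rw [ih hm' _ j, ih hm' _ j]
    have hprod : ∀ b, b < 2 →
        (∏ i ∈ Finset.range m, ent (φ (i + 1))
          (bfun n (2 * (cfn (n - m) (k : ℕ) / 2) + b) (j : ℕ) (i + 1))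
          (bfun n (2 * (cfn (n - m) (k : ℕ) / 2) + b) (j : ℕ) i)) =
        ∏ i ∈ Finset.range m, ent (φ (i + 1)) (bfun n (k : ℕ) (j : ℕ) (i + 1)) (bfun n (k : ℕ) (j : ℕ) i) := by
      intro b hb
      refine Finset.prod_congr rfl fun i hi => ?_
      have him := Finset.mem_range.mp hi
      rw [bfun_transfer hm hb (i + 1) (by omega), bfun_transfer hm hb i (by omega)]
    have hiff : ∀ b, b < 2 →
        ((condLow n m (2 * (cfn (n - m) (k : ℕ) / 2) + b) (j : ℕ) ∧
          (2 * (cfn (n - m) (k : ℕ) / 2) + b) % 2 = bfun n (2 * (cfn (n - m) (k : ℕ) / 2) + b) (j : ℕ) m) ↔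
        ((condLow n (m + 1) (k : ℕ) (j : ℕ) ∧ (k : ℕ) % 2 = bfun n (k : ℕ) (j : ℕ) (m + 1)) ∧
          b = bfun n (k : ℕ) (j : ℕ) m)) := by
      intro b hb
      have h1 : (2 * (cfn (n - m) (k : ℕ) / 2) + b) % 2 = b := by omega
      have h2 : bfun n (2 * (cfn (n - m) (k : ℕ) / 2) + b) (j : ℕ) m = bfun n (k : ℕ) (j : ℕ) m :=
        bfun_transfer hm hb m le_rfl
      rw [h1, h2]
      exact and_congr (cond_transfer hm hb) Iff.rfl
    simp only [Fin.val_mk,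
      show ((cfin (n - m) htn k : Fin (2 ^ (n + 1))) : ℕ) = cfn (n - m) (k : ℕ) from rfl]
    have hi0 : (condLow n m (2 * (cfn (n - m) (k : ℕ) / 2)) (j : ℕ) ∧
          2 * (cfn (n - m) (k : ℕ) / 2) % 2 = bfun n (2 * (cfn (n - m) (k : ℕ) / 2)) (j : ℕ) m) ↔
        ((condLow n (m + 1) (k : ℕ) (j : ℕ) ∧ (k : ℕ) % 2 = bfun n (k : ℕ) (j : ℕ) (m + 1)) ∧
          0 = bfun n (k : ℕ) (j : ℕ) m) := hiff 0 (by norm_num)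
    have hp0 : (∏ i ∈ Finset.range m, ent (φ (i + 1))
          (bfun n (2 * (cfn (n - m) (k : ℕ) / 2)) (j : ℕ) (i + 1))
          (bfun n (2 * (cfn (n - m) (k : ℕ) / 2)) (j : ℕ) i)) =
        ∏ i ∈ Finset.range m, ent (φ (i + 1)) (bfun n (k : ℕ) (j : ℕ) (i + 1)) (bfun n (k : ℕ) (j : ℕ) i) :=
      hprod 0 (by norm_num)
    rw [if_congr hi0 hp0 rfl,
      if_congr (hiff 1 (by norm_num)) (hprod 1 (by norm_num)) rfl,
      Finset.prod_range_succ]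
    have hKm2 : cfn (n - m) (k : ℕ) % 2 = (k : ℕ) % 2 := cfn_mod_two ht1 (k : ℕ)
    by_cases hP : condLow n (m + 1) (k : ℕ) (j : ℕ) ∧ (k : ℕ) % 2 = bfun n (k : ℕ) (j : ℕ) (m + 1)
    · simp only [if_pos hP, hP, true_and, if_true]
      have hblt := bfun_lt_two n (k : ℕ) (j : ℕ) m
      have hb1 := bfun_lt_two n (k : ℕ) (j : ℕ) (m + 1)
      have hP2 := hP.2
      have hent : ∀ (pf : cfn (n - m) (k : ℕ) % 2 < 2) (c : Fin 2),
          (c : ℕ) = bfun n (k : ℕ) (j : ℕ) m →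
          (phaseGate (φ (m + 1)) * RXgate) (⟨cfn (n - m) (k : ℕ) % 2, pf⟩ : Fin 2) c =
          ent (φ (m + 1)) (bfun n (k : ℕ) (j : ℕ) (m + 1)) (bfun n (k : ℕ) (j : ℕ) m) := by
        intro pf c hc
        show Mgate (φ (m + 1)) _ _ = Mgate (φ (m + 1)) _ _
        congr 1 <;> apply Fin.ext <;> simp only [Fin.val_mk] <;> omega
      rcases (by omega : bfun n (k : ℕ) (j : ℕ) m = 0 ∨ bfun n (k : ℕ) (j : ℕ) m = 1) with hb | hb
      · rw [if_pos hb.symm, if_neg (by omega), mul_zero, add_zero,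
          hent (by omega) 0 (by simp [hb])]
        ring
      · rw [if_neg (by omega), if_pos hb.symm, mul_zero, zero_add,
          hent (by omega) 1 (by simp [hb])]
        ring
    · simp only [if_neg hP, hP, false_and, if_false, mul_zero, add_zero]

lemma abs_Mgate_entry (x : ℝ) (r c : Fin 2) :
    ‖(phaseGate x * RXgate) r c‖ = 1 / Real.sqrt 2 := by
  have h : ent x (r : ℕ) (c : ℕ) = (phaseGate x * RXgate) r c := by
    show Mgate x _ _ = Mgate x _ _
    have hr := r.isLt
    have hc := c.isLt
    congr 1 <;> apply Fin.ext <;> simp only [Fin.val_mk] <;> omega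
  rw [← h, abs_ent]

lemma stepGate_unitary (n : ℕ) (φ : ℕ → ℝ) {r : ℕ} (hr : 1 ≤ r) :
    stepGate n φ r ∈ Matrix.unitaryGroup (Fin (2 ^ (n + 1))) ℂ := by
  unfold stepGate
  have hph : photonGate n (phaseGate (φ r) * RXgate) ∈
      Matrix.unitaryGroup (Fin (2 ^ (n + 1))) ℂ :=
    photon_unitary (Mgate_unitary (φ r))
  by_cases h : r ≤ n
  · rw [if_pos h]
    exact mul_mem (cnot_unitary (by omega) (by omega)) hph
  · rw [if_neg h, one_mul]
    exact hph

lemma Sprod_unitary (n : ℕ) (φ : ℕ → ℝ) :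
    ∀ m, Sprod n φ m ∈ Matrix.unitaryGroup (Fin (2 ^ (n + 1))) ℂ
  | 0 => one_mem _
  | m + 1 => mul_mem (stepGate_unitary n φ (by omega)) (Sprod_unitary n φ m)

open scoped Classical in
lemma Uphi_abs (n : ℕ) (φ : ℕ → ℝ) (k j : Fin (2 ^ (n + 1))) :
    ‖Uphi n φ k j‖ = (1 / Real.sqrt 2) ^ (n + 1) := by
  show ‖(stepGate n φ (n + 1) * Sprod n φ n) k j‖ = _
  rw [stepGate, if_neg (by omega), one_mul, photon_mul_apply]
  simp only [Sprod_apply n φ n le_rfl, Fin.val_mk]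
  have hcond : ∀ x, condLow n n x (j : ℕ) := fun x i h1 h2 => by omega
  have hprod : ∀ b, b < 2 →
      (∏ i ∈ Finset.range n, ent (φ (i + 1))
        (bfun n (2 * ((k : ℕ) / 2) + b) (j : ℕ) (i + 1))
        (bfun n (2 * ((k : ℕ) / 2) + b) (j : ℕ) i)) =
      ∏ i ∈ Finset.range n, ent (φ (i + 1)) (bfun n (k : ℕ) (j : ℕ) (i + 1))
        (bfun n (k : ℕ) (j : ℕ) i) := by
    intro b hb
    refine Finset.prod_congr rfl fun i hi => ?_
    have him := Finset.mem_range.mp hi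
    rw [bfun_transfer' hb (i + 1) (by omega), bfun_transfer' hb i (by omega)]
  have hiff : ∀ b, b < 2 →
      ((condLow n n (2 * ((k : ℕ) / 2) + b) (j : ℕ) ∧
        (2 * ((k : ℕ) / 2) + b) % 2 = bfun n (2 * ((k : ℕ) / 2) + b) (j : ℕ) n) ↔
      (b = bfun n (k : ℕ) (j : ℕ) n)) := by
    intro b hb
    have h1 : (2 * ((k : ℕ) / 2) + b) % 2 = b := by omega
    have h2 : bfun n (2 * ((k : ℕ) / 2) + b) (j : ℕ) n = bfun n (k : ℕ) (j : ℕ) n :=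
      bfun_transfer' hb n le_rfl
    rw [h1, h2]
    simp [hcond _]
  have hi0 : (condLow n n (2 * ((k : ℕ) / 2)) (j : ℕ) ∧
        2 * ((k : ℕ) / 2) % 2 = bfun n (2 * ((k : ℕ) / 2)) (j : ℕ) n) ↔
      (0 = bfun n (k : ℕ) (j : ℕ) n) := hiff 0 (by norm_num)
  have hp0 : (∏ i ∈ Finset.range n, ent (φ (i + 1))
        (bfun n (2 * ((k : ℕ) / 2)) (j : ℕ) (i + 1))
        (bfun n (2 * ((k : ℕ) / 2)) (j : ℕ) i)) =
      ∏ i ∈ Finset.range n, ent (φ (i + 1)) (bfun n (k : ℕ) (j : ℕ) (i + 1))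
        (bfun n (k : ℕ) (j : ℕ) i) := hprod 0 (by norm_num)
  rw [if_congr hi0 hp0 rfl, if_congr (hiff 1 (by norm_num)) (hprod 1 (by norm_num)) rfl]
  have habs : ‖∏ i ∈ Finset.range n,
      ent (φ (i + 1)) (bfun n (k : ℕ) (j : ℕ) (i + 1)) (bfun n (k : ℕ) (j : ℕ) i)‖ =
      (1 / Real.sqrt 2) ^ n := by
    rw [norm_prod]
    rw [Finset.prod_congr rfl fun i _ => abs_ent (φ (i + 1)) _ _, Finset.prod_const,
      Finset.card_range]
  rcases (by have := bfun_lt_two n (k : ℕ) (j : ℕ) n; omega :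
      bfun n (k : ℕ) (j : ℕ) n = 0 ∨ bfun n (k : ℕ) (j : ℕ) n = 1) with hb | hb
  · rw [if_pos hb.symm, if_neg (by omega), mul_zero, add_zero, norm_mul, habs,
      abs_Mgate_entry, pow_succ]
    ring
  · rw [if_neg (by omega), if_pos hb.symm, mul_zero, zero_add, norm_mul, habs,
      abs_Mgate_entry, pow_succ]
    ring

/-- Every entry of the matrix of `U_Φ` in the computational basis has
modulus exactly `2^{−(n+1)/2}`; equivalently, `2^{(n+1)/2}·U_Φ` is a complex Hadamard
matrix: `U_Φ` is unitary and all its entries have modulus `(1/√2)^{n+1}`. -/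
theorem stmt6 (n : ℕ) (hn : 1 ≤ n) (φ : ℕ → ℝ) :
    Uphi n φ ∈ Matrix.unitaryGroup (Fin (2 ^ (n + 1))) ℂ ∧
    ∀ k j : Fin (2 ^ (n + 1)),
      ‖Uphi n φ k j‖ = (1 / Real.sqrt 2) ^ (n + 1) := by
  exact ⟨Sprod_unitary n φ (n + 1), Uphi_abs n φ⟩
end struct2
end

section
/- For every integer k with 0 ≤ k < 2^m and every integer t with 0 ≤ t < 2^{n+1−m}, the coordinate of U_Φ · E_{m,s,α} at basis index k + t·2^m equals its coordinate at basis index k; i.e. the coordinates of U_Φ · E_{m,s,α} are independent of t within each residue class modulo 2^m. -/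
open Complex Matrix

/-- The vector `E_{m,s,α} ∈ ℂ^{2^{n+1}}` whose coordinate at basis index
`j = Σ_{l=0}^{n} j_l 2^l` is `2^{−n/2} · (−1)^{Σ_{l=1}^{m−1} j_l s_l} · α_{j₀}`. -/
noncomputable def Evec (n m : ℕ) (s : ℕ → Bool) (α : Fin 2 → ℂ) :
    Fin (2 ^ (n + 1)) → ℂ :=
  fun j => ((1 / Real.sqrt 2 : ℝ) ^ n : ℂ) *
    (∏ l ∈ Finset.Icc 1 (m - 1), if (j : ℕ).testBit l ∧ s l then (-1 : ℂ) else 1) *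
    α ⟨(j : ℕ) % 2, by omega⟩

namespace Stmt8Aux

/-- XOR commutes with mod by a power of two. -/
lemma xor_mod (x y c : ℕ) : (x ^^^ y) % 2 ^ c = (x % 2 ^ c) ^^^ (y % 2 ^ c) := by
  apply Nat.eq_of_testBit_eq
  intro i
  simp only [Nat.testBit_mod_two_pow, Nat.testBit_xor]
  by_cases h : i < c <;> simp [h]

lemma mod_two_of_mod_pow {m a b : ℕ} (hm : 1 ≤ m) (h : a % 2 ^ m = b % 2 ^ m) :
    a % 2 = b % 2 := by
  have h2 : (2 : ℕ) ∣ 2 ^ m := dvd_pow_self 2 (by omega)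
  rw [← Nat.mod_mod_of_dvd a h2, ← Nat.mod_mod_of_dvd b h2, h]

lemma two_mul_mod {m a b : ℕ} (hm : 1 ≤ m) (h : a % 2 ^ m = b % 2 ^ m) :
    (2 * (a / 2)) % 2 ^ m = (2 * (b / 2)) % 2 ^ m := by
  have hpow : (2 : ℕ) ^ m = 2 * 2 ^ (m - 1) := by
    rw [← pow_succ']; congr 1; omega
  have key : a / 2 % 2 ^ (m - 1) = b / 2 % 2 ^ (m - 1) := by
    rw [← Nat.mod_mul_right_div_self a 2 (2 ^ (m-1)), ← Nat.mod_mul_right_div_self b 2 (2 ^ (m-1)),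
      ← hpow, h]
  rw [hpow, Nat.mul_mod_mul_left, Nat.mul_mod_mul_left, key]

lemma two_mul_add_one_mod {m a b : ℕ} (hm : 1 ≤ m) (h : a % 2 ^ m = b % 2 ^ m) :
    (2 * (a / 2) + 1) % 2 ^ m = (2 * (b / 2) + 1) % 2 ^ m := by
  have hpow : (2 : ℕ) ^ m = 2 * 2 ^ (m - 1) := by
    rw [← pow_succ']; congr 1; omega
  have key : a / 2 % 2 ^ (m - 1) = b / 2 % 2 ^ (m - 1) := by
    rw [← Nat.mod_mul_right_div_self a 2 (2 ^ (m-1)), ← Nat.mod_mul_right_div_self b 2 (2 ^ (m-1)),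
      ← hpow, h]
  have gen : ∀ x : ℕ, (2 * x + 1) % (2 * 2 ^ (m - 1)) = 2 * (x % 2 ^ (m - 1)) + 1 := by
    intro x
    set c := 2 ^ (m - 1) with hc
    have hcpos : 0 < c := Nat.pow_pos (by norm_num)
    obtain ⟨q, r, hlt, rfl⟩ : ∃ q r, r < c ∧ x = c * q + r :=
      ⟨x / c, x % c, Nat.mod_lt x hcpos, (Nat.div_add_mod x c).symm⟩
    have hmodc : (c * q + r) % c = r := by
      rw [show c * q + r = r + q * c by ring, Nat.add_mul_mod_self_right, Nat.mod_eq_of_lt hlt]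
    rw [hmodc, show 2 * (c * q + r) + 1 = 2 * r + 1 + q * (2 * c) by ring,
      Nat.add_mul_mod_self_right, Nat.mod_eq_of_lt (by omega)]
  rw [hpow, gen (a / 2), gen (b / 2), key]

end Stmt8Aux

namespace Stmt8Aux

open Complex Matrix

/-- Coordinates of `v` depend only on the index modulo `2^m`. -/
def Dep (n m : ℕ) (v : Fin (2 ^ (n + 1)) → ℂ) : Prop :=
  ∀ a b : Fin (2 ^ (n + 1)), (a : ℕ) % 2 ^ m = (b : ℕ) % 2 ^ m → v a = v b

lemma pow_succ_eq (n : ℕ) : (2 : ℕ) ^ (n + 1) = 2 * 2 ^ n := by rw [pow_succ']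

lemma photon_mulVec (n : ℕ) (A : Matrix (Fin 2) (Fin 2) ℂ) (v : Fin (2 ^ (n + 1)) → ℂ)
    (a : Fin (2 ^ (n + 1))) :
    (photonGate n A *ᵥ v) a =
      A ⟨(a : ℕ) % 2, by omega⟩ 0 * v ⟨2 * ((a : ℕ) / 2), by
          have h := a.isLt; have h2 := pow_succ_eq n; omega⟩ +
      A ⟨(a : ℕ) % 2, by omega⟩ 1 * v ⟨2 * ((a : ℕ) / 2) + 1, by
          have h := a.isLt; have h2 := pow_succ_eq n; omega⟩ := by
  classical
  have hb0 : 2 * ((a : ℕ) / 2) < 2 ^ (n + 1) := by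
    have h := a.isLt; have h2 := pow_succ_eq n; omega
  have hb1 : 2 * ((a : ℕ) / 2) + 1 < 2 ^ (n + 1) := by
    have h := a.isLt; have h2 := pow_succ_eq n; omega
  set e0 : Fin (2 ^ (n + 1)) := ⟨2 * ((a : ℕ) / 2), hb0⟩
  set e1 : Fin (2 ^ (n + 1)) := ⟨2 * ((a : ℕ) / 2) + 1, hb1⟩
  have hsum : (photonGate n A *ᵥ v) a =
      ∑ j : Fin (2 ^ (n + 1)),
        ((if j = e0 then photonGate n A a j * v j else 0) +
         (if j = e1 then photonGate n A a j * v j else 0)) := by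
    rw [Matrix.mulVec, dotProduct]
    apply Finset.sum_congr rfl
    intro j _
    by_cases hj0 : j = e0
    · subst hj0
      have hne : e0 ≠ e1 := by
        simp only [e0, e1, Fin.mk.injEq, Ne]; omega
      simp [hne]
    · by_cases hj1 : j = e1
      · subst hj1; simp [hj0]
      · have hd : (a : ℕ) / 2 ≠ (j : ℕ) / 2 := by
          intro hcontra
          have hj2 : (j : ℕ) % 2 = 0 ∨ (j : ℕ) % 2 = 1 := by omega
          rcases hj2 with hj2 | hj2
          · apply hj0; apply Fin.ext
            simp only [e0]; omega
          · apply hj1; apply Fin.ext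
            simp only [e1]; omega
        simp [photonGate, hd, hj0, hj1]
  rw [hsum, Finset.sum_add_distrib, Finset.sum_ite_eq', Finset.sum_ite_eq']
  simp only [Finset.mem_univ, if_true]
  have he0 : photonGate n A a e0 = A ⟨(a : ℕ) % 2, by omega⟩ 0 := by
    simp only [photonGate, e0]
    rw [if_pos (by omega)]
    congr 1
    apply Fin.ext; simp; try omega
  have he1 : photonGate n A a e1 = A ⟨(a : ℕ) % 2, by omega⟩ 1 := by
    simp only [photonGate, e1]
    rw [if_pos (by omega)]
    congr 1
    apply Fin.ext; simp; try omega
  rw [he0, he1]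

lemma dep_photon {n m : ℕ} (hm : 1 ≤ m) (A : Matrix (Fin 2) (Fin 2) ℂ)
    {v : Fin (2 ^ (n + 1)) → ℂ} (hv : Dep n m v) : Dep n m (photonGate n A *ᵥ v) := by
  intro a b hab
  rw [photon_mulVec, photon_mulVec]
  have h2 : (a : ℕ) % 2 = (b : ℕ) % 2 := mod_two_of_mod_pow hm hab
  have hA : (⟨(a : ℕ) % 2, by omega⟩ : Fin 2) = ⟨(b : ℕ) % 2, by omega⟩ := Fin.ext h2
  rw [hA, hv ⟨2 * ((a : ℕ) / 2), _⟩ ⟨2 * ((b : ℕ) / 2), _⟩ (two_mul_mod hm hab),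
    hv ⟨2 * ((a : ℕ) / 2) + 1, _⟩ ⟨2 * ((b : ℕ) / 2) + 1, _⟩ (two_mul_add_one_mod hm hab)]

/-- The index computation of the CNOT gate. -/
def cImg (t x : ℕ) : ℕ := if x % 2 = 1 then x ^^^ 2 ^ t else x

lemma cImg_mod_two (t : ℕ) (ht : 1 ≤ t) (x : ℕ) : cImg t x % 2 = x % 2 := by
  unfold cImg
  split
  · have : (x ^^^ 2 ^ t) % 2 ^ 1 = x % 2 ^ 1 ^^^ 2 ^ t % 2 ^ 1 := xor_mod x (2 ^ t) 1
    have h2 : 2 ^ t % 2 = 0 := by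
      have : (2 : ℕ) ^ t = 2 * 2 ^ (t - 1) := by rw [← pow_succ']; congr 1; omega
      omega
    simpa [pow_one, h2] using this
  · rfl

lemma cImg_invol (t : ℕ) (ht : 1 ≤ t) (x : ℕ) : cImg t (cImg t x) = x := by
  have hmod := cImg_mod_two t ht x
  by_cases hx : x % 2 = 1
  · have h1 : cImg t x = x ^^^ 2 ^ t := if_pos hx
    rw [h1] at hmod ⊢
    rw [cImg, if_pos (hmod.trans hx), xor_cancel_right]
  · have h1 : cImg t x = x := if_neg hx
    rw [h1, cImg, if_neg hx]

lemma cImg_lt (n t x : ℕ) (htn : t ≤ n) (hx : x < 2 ^ (n + 1)) : cImg t x < 2 ^ (n + 1) := by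
  unfold cImg
  split
  · exact Nat.xor_lt_two_pow hx (by
      calc (2:ℕ) ^ t < 2 ^ (t + 1) := by
            have := Nat.pow_pos (n := t) (show 0 < 2 by norm_num); omega
        _ ≤ 2 ^ (n + 1) := Nat.pow_le_pow_right (by norm_num) (by omega))
  · exact hx

lemma cnot_mulVec (n t : ℕ) (ht : 1 ≤ t) (htn : t ≤ n) (v : Fin (2 ^ (n + 1)) → ℂ)
    (a : Fin (2 ^ (n + 1))) :
    (cnotGate n t *ᵥ v) a = v ⟨cImg t (a : ℕ), cImg_lt n t _ htn a.isLt⟩ := by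
  classical
  set ia : Fin (2 ^ (n + 1)) := ⟨cImg t (a : ℕ), cImg_lt n t _ htn a.isLt⟩
  have hsum : (cnotGate n t *ᵥ v) a = ∑ j : Fin (2 ^ (n + 1)), (if j = ia then v j else 0) := by
    rw [Matrix.mulVec, dotProduct]
    apply Finset.sum_congr rfl
    intro j _
    have hiff : ((a : ℕ) = cImg t (j : ℕ)) ↔ (j = ia) := by
      constructor
      · intro h
        apply Fin.ext
        simp only [ia]
        rw [h, cImg_invol t ht]
      · intro h
        rw [h]
        simp only [ia]
        rw [cImg_invol t ht]
    show (if (a : ℕ) = cImg t (j : ℕ) then 1 else 0) * v j = if j = ia then v j else 0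
    by_cases h : j = ia
    · rw [if_pos (hiff.mpr h), if_pos h, one_mul]
    · rw [if_neg (fun hc => h (hiff.mp hc)), if_neg h, zero_mul]
  rw [hsum, Finset.sum_ite_eq']
  simp

lemma dep_cnot {n m t : ℕ} (hm : 1 ≤ m) (ht : 1 ≤ t) (htn : t ≤ n)
    {v : Fin (2 ^ (n + 1)) → ℂ} (hv : Dep n m v) : Dep n m (cnotGate n t *ᵥ v) := by
  intro a b hab
  rw [cnot_mulVec n t ht htn, cnot_mulVec n t ht htn]
  apply hv
  show cImg t (a : ℕ) % 2 ^ m = cImg t (b : ℕ) % 2 ^ m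
  have h2 : (a : ℕ) % 2 = (b : ℕ) % 2 := mod_two_of_mod_pow hm hab
  unfold cImg
  by_cases hx : (a : ℕ) % 2 = 1
  · rw [if_pos hx, if_pos (h2 ▸ hx), xor_mod, xor_mod, hab]
  · rw [if_neg hx, if_neg (h2 ▸ hx), hab]

lemma dep_step {n m : ℕ} (hm : 1 ≤ m) (φ : ℕ → ℝ) (k : ℕ) (hk : 1 ≤ k)
    {v : Fin (2 ^ (n + 1)) → ℂ} (hv : Dep n m v) : Dep n m (stepGate n φ k *ᵥ v) := by
  rw [stepGate, ← Matrix.mulVec_mulVec]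
  by_cases hkn : k ≤ n
  · rw [if_pos hkn]
    exact dep_cnot hm (by omega) (by omega) (dep_photon hm _ hv)
  · rw [if_neg hkn, Matrix.one_mulVec]
    exact dep_photon hm _ hv

lemma dep_Sprod {n m : ℕ} (hm : 1 ≤ m) (φ : ℕ → ℝ)
    {v : Fin (2 ^ (n + 1)) → ℂ} (hv : Dep n m v) (j : ℕ) : Dep n m (Sprod n φ j *ᵥ v) := by
  induction j with
  | zero => rw [Sprod, Matrix.one_mulVec]; exact hv
  | succ j ih =>
      rw [Sprod, ← Matrix.mulVec_mulVec]
      exact dep_step hm φ (j + 1) (by omega) ih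

lemma dep_Evec {n m : ℕ} (hm : 1 ≤ m) (s : ℕ → Bool) (α : Fin 2 → ℂ) :
    Dep n m (Evec n m s α) := by
  intro a b hab
  unfold Evec
  have h2 : (a : ℕ) % 2 = (b : ℕ) % 2 := mod_two_of_mod_pow hm hab
  have hα : (⟨(a : ℕ) % 2, by omega⟩ : Fin 2) = ⟨(b : ℕ) % 2, by omega⟩ := Fin.ext h2
  rw [hα]
  congr 1
  congr 1
  apply Finset.prod_congr rfl
  intro l hl
  have hlm : l < m := by
    rw [Finset.mem_Icc] at hl; omega
  have hbit : (a : ℕ).testBit l = (b : ℕ).testBit l := by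
    have ha := Nat.testBit_mod_two_pow (a : ℕ) m l
    have hb := Nat.testBit_mod_two_pow (b : ℕ) m l
    rw [hab, hb] at ha
    simpa [hlm] using ha.symm
  rw [hbit]

end Stmt8Aux

/-- For every `0 ≤ k < 2^m` and `0 ≤ t < 2^{n+1−m}`, the coordinate of
`U_Φ · E_{m,s,α}` at basis index `k + t·2^m` equals its coordinate at basis index `k`;
i.e. the coordinates of `U_Φ · E_{m,s,α}` are independent of `t` within each residue
class modulo `2^m`. -/
theorem stmt8 (n m : ℕ) (hn : 1 ≤ n) (hm : 1 ≤ m) (hmn : m ≤ n + 1)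
    (φ : ℕ → ℝ) (s : ℕ → Bool) (hs : 2 ≤ m → s (m - 1) = true) (α : Fin 2 → ℂ)
    (k t : ℕ) (hk : k < 2 ^ m) (ht : t < 2 ^ (n + 1 - m)) :
    (Uphi n φ *ᵥ Evec n m s α) ⟨k + t * 2 ^ m, by
        calc k + t * 2 ^ m < 2 ^ m + t * 2 ^ m := Nat.add_lt_add_right hk _
          _ = (t + 1) * 2 ^ m := by ring
          _ ≤ 2 ^ (n + 1 - m) * 2 ^ m := Nat.mul_le_mul_right _ (Nat.succ_le_of_lt ht)
          _ = 2 ^ (n + 1) := by rw [← pow_add]; congr 1; omega⟩ =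
      (Uphi n φ *ᵥ Evec n m s α)
        ⟨k, lt_of_lt_of_le hk (Nat.pow_le_pow_right (by norm_num) hmn)⟩ := by
  have hd : Stmt8Aux.Dep n m (Uphi n φ *ᵥ Evec n m s α) := by
    rw [Uphi]
    exact Stmt8Aux.dep_Sprod hm φ (Stmt8Aux.dep_Evec hm s α) (n + 1)
  apply hd
  show (k + t * 2 ^ m) % 2 ^ m = k % 2 ^ m
  exact Nat.add_mul_mod_self_right k t (2 ^ m)
end

section
/- For every integer k with 0 ≤ k < 2^m, with binary digits k = Σ_{l=0}^{m−1} k_l 2^l, the coordinate of U_Φ · E_{m,s,α} at basis index k equals (−1)^{Σ_{l=1}^{m−1} k_l s_l} times its coordinate at basis index k₀ ∈ {0,1}. -/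
open Complex Matrix

noncomputable def chi (m : ℕ) (s : ℕ → Bool) (j : ℕ) : ℂ :=
  ∏ l ∈ Finset.Icc 1 (m - 1), if j.testBit l ∧ s l then (-1 : ℂ) else 1

lemma chi_congr {m : ℕ} {s : ℕ → Bool} {j j' : ℕ}
    (h : j / 2 = j' / 2) : chi m s j = chi m s j' := by
  refine Finset.prod_congr rfl fun l hl => ?_
  obtain ⟨l', rfl⟩ : ∃ l', l = l' + 1 := ⟨l - 1, by have := (Finset.mem_Icc.mp hl).1; omega⟩
  rw [Nat.testBit_succ, Nat.testBit_succ, h]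

lemma chi_xor {m : ℕ} {s : ℕ → Bool} (j t : ℕ) (ht : 1 ≤ t) :
    chi m s (j ^^^ 2 ^ t) = (if t ≤ m - 1 ∧ s t then (-1 : ℂ) else 1) * chi m s j := by
  have hbit : ∀ l, l ≠ t → (j ^^^ 2 ^ t).testBit l = j.testBit l := by
    intro l hl
    rw [Nat.testBit_xor, Nat.testBit_two_pow]
    simp [Ne.symm hl]
  by_cases htm : t ≤ m - 1
  · have htmem : t ∈ Finset.Icc 1 (m - 1) := Finset.mem_Icc.mpr ⟨ht, htm⟩
    unfold chi
    rw [← Finset.mul_prod_erase _ _ htmem, ← Finset.mul_prod_erase _ _ htmem]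
    have herase : ∀ l ∈ (Finset.Icc 1 (m-1)).erase t,
        (if (j ^^^ 2 ^ t).testBit l ∧ s l then (-1:ℂ) else 1)
          = (if j.testBit l ∧ s l then (-1:ℂ) else 1) := by
      intro l hl
      rw [hbit l (Finset.ne_of_mem_erase hl)]
    rw [Finset.prod_congr rfl herase]
    have hself : (j ^^^ 2 ^ t).testBit t = ! j.testBit t := by
      rw [Nat.testBit_xor, Nat.testBit_two_pow_self, Bool.xor_true]
    rw [hself]
    by_cases hst : s t
    · simp only [hst, htm, and_true, true_and, if_true]
      cases h : j.testBit t <;> simp [h]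
    · simp [hst]
  · simp only [htm, false_and, if_false, one_mul]
    refine Finset.prod_congr rfl fun l hl => ?_
    have : l ≠ t := by
      have := (Finset.mem_Icc.mp hl).2; omega
    rw [hbit l this]

lemma chi_mod_two {m : ℕ} {s : ℕ → Bool} (k : ℕ) : chi m s (k % 2) = 1 := by
  refine Finset.prod_eq_one fun l hl => ?_
  have h1 : 1 ≤ l := (Finset.mem_Icc.mp hl).1
  have : (k % 2).testBit l = false := by
    apply Nat.testBit_lt_two_pow
    calc k % 2 < 2 := Nat.mod_lt _ two_pos
    _ = 2 ^ 1 := (pow_one 2).symm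
    _ ≤ 2 ^ l := Nat.pow_le_pow_right (by norm_num) h1
  simp [this]

noncomputable def Wvec (n m : ℕ) (s : ℕ → Bool) (β : Fin 2 → ℂ) :
    Fin (2 ^ (n + 1)) → ℂ :=
  fun j => chi m s (j : ℕ) * β ⟨(j : ℕ) % 2, by omega⟩

lemma photon_W (n m : ℕ) (s : ℕ → Bool) (A : Matrix (Fin 2) (Fin 2) ℂ) (β : Fin 2 → ℂ) :
    photonGate n A *ᵥ Wvec n m s β = Wvec n m s (A *ᵥ β) := by
  funext k
  have hk2 : (k : ℕ) < 2 ^ (n + 1) := k.2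
  have hpow : 2 * 2 ^ n = 2 ^ (n + 1) := by ring
  set q := (k : ℕ) / 2 with hq
  have hq1 : 2 * q + 1 < 2 ^ (n + 1) := by omega
  set j0 : Fin (2 ^ (n + 1)) := ⟨2 * q, by omega⟩
  set j1 : Fin (2 ^ (n + 1)) := ⟨2 * q + 1, by omega⟩
  have hsum : (photonGate n A *ᵥ Wvec n m s β) k =
      (fun j => photonGate n A k j * Wvec n m s β j) j0 +
      (fun j => photonGate n A k j * Wvec n m s β j) j1 := by
    refine Finset.sum_eq_add_of_mem j0 j1 (Finset.mem_univ _) (Finset.mem_univ _)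
      (by simp [j0, j1, Fin.ext_iff]) ?_
    intro c _ hc
    have : ¬ ((k : ℕ) / 2 = (c : ℕ) / 2) := by
      intro h
      rcases Nat.mod_two_eq_zero_or_one (c : ℕ) with hm | hm
      · exact hc.1 (Fin.ext (show (c : ℕ) = 2 * q by omega))
      · exact hc.2 (Fin.ext (show (c : ℕ) = 2 * q + 1 by omega))
    simp [photonGate, this]
  rw [hsum]
  simp only [photonGate, j0, j1]
  have h0 : (2 * q) / 2 = q := by omega
  have h1 : (2 * q + 1) / 2 = q := by omega
  rw [if_pos (by simp [h0]; rfl), if_pos (by simp [h1]; rfl)]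
  have hm0 : (2 * q) % 2 = 0 := by omega
  have hm1 : (2 * q + 1) % 2 = 1 := by omega
  have hc0 : chi m s (2 * q) = chi m s (k : ℕ) := chi_congr (by omega)
  have hc1 : chi m s (2 * q + 1) = chi m s (k : ℕ) := chi_congr (by omega)
  simp only [Wvec, hc0, hc1]
  have e0 : (⟨(2 * q) % 2, by omega⟩ : Fin 2) = 0 := by ext; simp [hm0]
  have e1 : (⟨(2 * q + 1) % 2, by omega⟩ : Fin 2) = 1 := by ext; simp [hm1]
  rw [e0, e1]
  rw [show (A *ᵥ β) ⟨(k:ℕ) % 2, by omega⟩ =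
    A ⟨(k:ℕ) % 2, by omega⟩ 0 * β 0 + A ⟨(k:ℕ) % 2, by omega⟩ 1 * β 1 by
      simp [Matrix.mulVec, dotProduct, Fin.sum_univ_two]]
  ring
def cnotFun (t x : ℕ) : ℕ := if x % 2 = 1 then x ^^^ 2 ^ t else x

lemma cnotFun_parity {t : ℕ} (ht1 : 1 ≤ t) (x : ℕ) : (x ^^^ 2 ^ t) % 2 = x % 2 := by
  have h1 : (x ^^^ 2 ^ t).testBit 0 = x.testBit 0 := by
    rw [Nat.testBit_xor, Nat.testBit_two_pow]
    simp [show ¬ (t = 0) by omega]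
  simp only [Nat.testBit_zero, decide_eq_decide] at h1
  omega

lemma cnotFun_invol {t : ℕ} (ht1 : 1 ≤ t) (x : ℕ) : cnotFun t (cnotFun t x) = x := by
  by_cases hx : x % 2 = 1
  · simp only [cnotFun, hx, if_true, cnotFun_parity ht1 x, hx, if_true]
    exact Nat.xor_xor_cancel_right _ _
  · simp [cnotFun, hx]

lemma cnot_W (n m : ℕ) (s : ℕ → Bool) (t : ℕ) (ht1 : 1 ≤ t) (htn : t ≤ n) (β : Fin 2 → ℂ) :
    cnotGate n t *ᵥ Wvec n m s β =
      Wvec n m s (fun i => (if t ≤ m - 1 ∧ s t then (-1:ℂ) else 1) ^ (i : ℕ) * β i) := by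
  funext k
  have hk2 : (k : ℕ) < 2 ^ (n + 1) := k.2
  have hpowlt : 2 ^ t < 2 ^ (n + 1) := Nat.pow_lt_pow_right one_lt_two (by omega)
  have hfslt : cnotFun t (k : ℕ) < 2 ^ (n + 1) := by
    unfold cnotFun
    split
    · exact Nat.xor_lt_two_pow hk2 hpowlt
    · exact hk2
  set jstar : Fin (2 ^ (n + 1)) := ⟨cnotFun t (k : ℕ), hfslt⟩ with hjstar
  have hcg : ∀ j : Fin (2 ^ (n + 1)), cnotGate n t k j
      = if (k : ℕ) = cnotFun t (j : ℕ) then 1 else 0 := fun j => rfl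
  have hsum : (cnotGate n t *ᵥ Wvec n m s β) k = Wvec n m s β jstar := by
    show ∑ j, cnotGate n t k j * Wvec n m s β j = _
    rw [Finset.sum_eq_single_of_mem jstar (Finset.mem_univ _)]
    · rw [hcg, if_pos (by rw [hjstar]; exact (cnotFun_invol ht1 (k : ℕ)).symm), one_mul]
    · intro b _ hb
      rw [hcg, if_neg, zero_mul]
      intro h
      apply hb
      apply Fin.ext
      show (b : ℕ) = cnotFun t (k : ℕ)
      rw [h]
      exact (cnotFun_invol ht1 (b : ℕ)).symm
  rw [hsum]
  simp only [Wvec, hjstar]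
  by_cases hk1 : (k : ℕ) % 2 = 1
  · have hfv : cnotFun t (k : ℕ) = (k : ℕ) ^^^ 2 ^ t := by simp [cnotFun, hk1]
    simp only [hfv, cnotFun_parity ht1, chi_xor _ t ht1, hk1]
    simp [pow_one]
  · have hfv : cnotFun t (k : ℕ) = (k : ℕ) := by simp [cnotFun, hk1]
    have hk0 : (k : ℕ) % 2 = 0 := by omega
    simp only [hfv, hk0, pow_zero, one_mul]


lemma step_W (n m : ℕ) (s : ℕ → Bool) (φ : ℕ → ℝ) (r : ℕ) (hr1 : 1 ≤ r) (β : Fin 2 → ℂ) :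
    ∃ β' : Fin 2 → ℂ, stepGate n φ r *ᵥ Wvec n m s β = Wvec n m s β' := by
  unfold stepGate
  rw [← Matrix.mulVec_mulVec, photon_W]
  by_cases hrn : r ≤ n
  · rw [if_pos hrn]
    exact ⟨_, cnot_W n m s (n + 1 - r) (by omega) (by omega) _⟩
  · rw [if_neg hrn]
    exact ⟨_, Matrix.one_mulVec _⟩

lemma sprod_W (n m : ℕ) (s : ℕ → Bool) (φ : ℕ → ℝ) (r : ℕ) (β : Fin 2 → ℂ) :
    ∃ β' : Fin 2 → ℂ, Sprod n φ r *ᵥ Wvec n m s β = Wvec n m s β' := by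
  induction r with
  | zero => exact ⟨β, Matrix.one_mulVec _⟩
  | succ r ih =>
    obtain ⟨β', hβ'⟩ := ih
    obtain ⟨β'', hβ''⟩ := step_W n m s φ (r + 1) (by omega) β'
    exact ⟨β'', by rw [show Sprod n φ (r + 1) = stepGate n φ (r + 1) * Sprod n φ r from rfl,
      ← Matrix.mulVec_mulVec, hβ', hβ'']⟩


/-- For every `0 ≤ k < 2^m` with binary digits `k = Σ_{l=0}^{m−1} k_l 2^l`,
the coordinate of `U_Φ · E_{m,s,α}` at basis index `k` equals
`(−1)^{Σ_{l=1}^{m−1} k_l s_l}` times its coordinate at basis index `k₀ = k mod 2 ∈ {0,1}`. -/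
theorem stmt9 (n m : ℕ) (hn : 1 ≤ n) (hm : 1 ≤ m) (hmn : m ≤ n + 1)
    (φ : ℕ → ℝ) (s : ℕ → Bool) (hs : 2 ≤ m → s (m - 1) = true) (α : Fin 2 → ℂ)
    (k : ℕ) (hk : k < 2 ^ m) :
    (Uphi n φ *ᵥ Evec n m s α)
        ⟨k, lt_of_lt_of_le hk (Nat.pow_le_pow_right (by norm_num) hmn)⟩ =
      (∏ l ∈ Finset.Icc 1 (m - 1), if k.testBit l ∧ s l then (-1 : ℂ) else 1) *
        (Uphi n φ *ᵥ Evec n m s α)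
          ⟨k % 2, lt_of_lt_of_le (Nat.mod_lt _ two_pos)
            (by calc (2 : ℕ) = 2 ^ 1 := (pow_one 2).symm
              _ ≤ 2 ^ (n + 1) := Nat.pow_le_pow_right (by norm_num) (by omega))⟩ := by
  have hE : Evec n m s α = Wvec n m s (fun i => ((1 / Real.sqrt 2 : ℝ) ^ n : ℂ) * α i) := by
    funext j
    simp only [Evec, Wvec, chi]
    ring
  obtain ⟨β, hβ⟩ := sprod_W n m s φ (n + 1) (fun i => ((1 / Real.sqrt 2 : ℝ) ^ n : ℂ) * α i)
  have hU : Uphi n φ *ᵥ Evec n m s α = Wvec n m s β := by rw [Uphi, hE, hβ]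
  rw [hU]
  show chi m s k * β ⟨k % 2, by omega⟩ =
    chi m s k * (chi m s (k % 2) * β ⟨k % 2 % 2, by omega⟩)
  rw [chi_mod_two]
  have hfin : (⟨k % 2 % 2, by omega⟩ : Fin 2) = ⟨k % 2, by omega⟩ := Fin.ext (by simp)
  rw [hfin, one_mul]
end

section
/- Duality of the ancillary-qubit solution: suppose a₀, b₀, a₁ ∈ ℝ satisfy a₀² + b₀² + a₁² = 1 and a₀ = −b₀·cot((γ₀₁ − γ₁₀)/2), and set α₀ = a₀ + i·b₀, α₁ = a₁. Assume (i) |ϱ₀₀·α₀ + ϱ₁₀·α₁|² = |α₀|²/2ⁿ, (ii) |ϱ₀₁·α₀ + ϱ₁₁·α₁|² = |α₁|²/2ⁿ, and (iii) α₁·(ϱ₀₀·α₀ + ϱ₁₀·α₁) = α₀·(ϱ₀₁·α₀ + ϱ₁₁·α₁). Then the dual pair α₀' = a₁, α₁' = −a₀ + i·b₀ also satisfies (i'), (ii'), (iii'): |ϱ₀₀·α₀' + ϱ₁₀·α₁'|² = |α₀'|²/2ⁿ, |ϱ₀₁·α₀' + ϱ₁₁·α₁'|² = |α₁'|²/2ⁿ,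 and α₁'·(ϱ₀₀·α₀' + ϱ₁₀·α₁') = α₀'·(ϱ₀₁·α₀' + ϱ₁₁·α₁'). -/
open Complex

/-- **duality of the ancillary-qubit solution.** Let `n : ℕ` and
`ω, γ₀₀, γ₀₁, γ₁₀ : ℝ` with `sin((γ₀₁ − γ₁₀)/2) ≠ 0` and with `cos(γ₀₀ + γ₀₁)`,
`cos(γ₀₀ + γ₁₀)`, `sin(γ₀₀ + γ₀₁)`, `sin(γ₀₀ + γ₁₀)` all nonzero.  Define
`ϱ₀₀ = 2^{−n/2} cos ω e^{iγ₀₀}`, `ϱ₁₀ = 2^{−n/2} sin ω e^{iγ₁₀}`,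
`ϱ₀₁ = 2^{−n/2} sin ω e^{iγ₀₁}`, `ϱ₁₁ = −2^{−n/2} cos ω e^{i(γ₀₁+γ₁₀−γ₀₀)}`.
Suppose `a₀, b₀, a₁ : ℝ` satisfy `a₀² + b₀² + a₁² = 1` and `a₀ = −b₀ cot((γ₀₁−γ₁₀)/2)`,
and set `α₀ = a₀ + i b₀`, `α₁ = a₁`.  If (i) `|ϱ₀₀ α₀ + ϱ₁₀ α₁|² = |α₀|²/2ⁿ`,
(ii) `|ϱ₀₁ α₀ + ϱ₁₁ α₁|² = |α₁|²/2ⁿ` and (iii) `α₁(ϱ₀₀ α₀ + ϱ₁₀ α₁) = α₀(ϱ₀₁ α₀ + ϱ₁₁ α₁)`,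
then the dual pair `α₀' = a₁`, `α₁' = −a₀ + i b₀` also satisfies (i'), (ii'), (iii'). -/
theorem stmt13 (n : ℕ) (ω γ₀₀ γ₀₁ γ₁₀ : ℝ)
    (hhalf : Real.sin ((γ₀₁ - γ₁₀) / 2) ≠ 0)
    (hc1 : Real.cos (γ₀₀ + γ₀₁) ≠ 0) (hc2 : Real.cos (γ₀₀ + γ₁₀) ≠ 0)
    (hs1 : Real.sin (γ₀₀ + γ₀₁) ≠ 0) (hs2 : Real.sin (γ₀₀ + γ₁₀) ≠ 0)
    (a₀ b₀ a₁ : ℝ) (hnorm : a₀ ^ 2 + b₀ ^ 2 + a₁ ^ 2 = 1)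
    (hcot : a₀ = -b₀ * Real.cot ((γ₀₁ - γ₁₀) / 2)) :
    let c : ℂ := ((1 / Real.sqrt 2 : ℝ) ^ n : ℂ)
    let ϱ₀₀ : ℂ := c * Real.cos ω * Complex.exp (I * γ₀₀)
    let ϱ₁₀ : ℂ := c * Real.sin ω * Complex.exp (I * γ₁₀)
    let ϱ₀₁ : ℂ := c * Real.sin ω * Complex.exp (I * γ₀₁)
    let ϱ₁₁ : ℂ := -(c * Real.cos ω * Complex.exp (I * (γ₀₁ + γ₁₀ - γ₀₀)))
    let α₀ : ℂ := (a₀ : ℂ) + b₀ * I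
    let α₁ : ℂ := (a₁ : ℂ)
    let α₀' : ℂ := (a₁ : ℂ)
    let α₁' : ℂ := -(a₀ : ℂ) + b₀ * I
    ‖ϱ₀₀ * α₀ + ϱ₁₀ * α₁‖ ^ 2 = ‖α₀‖ ^ 2 / 2 ^ n →
    ‖ϱ₀₁ * α₀ + ϱ₁₁ * α₁‖ ^ 2 = ‖α₁‖ ^ 2 / 2 ^ n →
    α₁ * (ϱ₀₀ * α₀ + ϱ₁₀ * α₁) = α₀ * (ϱ₀₁ * α₀ + ϱ₁₁ * α₁) →
    (‖ϱ₀₀ * α₀' + ϱ₁₀ * α₁'‖ ^ 2 = ‖α₀'‖ ^ 2 / 2 ^ n ∧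
      ‖ϱ₀₁ * α₀' + ϱ₁₁ * α₁'‖ ^ 2 = ‖α₁'‖ ^ 2 / 2 ^ n ∧
      α₁' * (ϱ₀₀ * α₀' + ϱ₁₀ * α₁') = α₀' * (ϱ₀₁ * α₀' + ϱ₁₁ * α₁')) := by
  intro c ϱ₀₀ ϱ₁₀ ϱ₀₁ ϱ₁₁ α₀ α₁ α₀' α₁' h1 h2 h3
  have he : ∀ x : ℝ, (starRingEnd ℂ) (Complex.exp (I * x)) = (Complex.exp (I * x))⁻¹ := by
    intro x
    rw [← Complex.exp_conj, ← Complex.exp_neg]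
    congr 1
    simp [Complex.conj_I]
  have hcc : (starRingEnd ℂ) c = c := by simp [c]
  have hsplit : Complex.exp (I * ((γ₀₁:ℂ) + γ₁₀ - γ₀₀)) =
      Complex.exp (I * γ₀₁) * Complex.exp (I * γ₁₀) * (Complex.exp (I * γ₀₀))⁻¹ := by
    rw [← Complex.exp_add, ← Complex.exp_neg, ← Complex.exp_add]
    congr 1
    ring
  have hsum : Complex.exp (I * ((γ₀₁:ℂ) + γ₁₀)) =
      Complex.exp (I * γ₀₁) * Complex.exp (I * γ₁₀) := by
    rw [← Complex.exp_add]; congr 1; ring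
  have hA : ϱ₀₀ * α₀' + ϱ₁₀ * α₁' =
      -(Complex.exp (I * ((γ₀₁:ℂ) + γ₁₀)) * (starRingEnd ℂ) (ϱ₀₁ * α₀ + ϱ₁₁ * α₁)) := by
    simp only [ϱ₀₀, ϱ₁₀, ϱ₀₁, ϱ₁₁, α₀, α₁, α₀', α₁', map_add, map_mul, map_neg,
      Complex.conj_ofReal, Complex.conj_I, hcc, he, hsplit, hsum, map_inv₀, inv_inv]
    field_simp [Complex.exp_ne_zero]
    ring
  have hB : ϱ₀₁ * α₀' + ϱ₁₁ * α₁' =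
      Complex.exp (I * ((γ₀₁:ℂ) + γ₁₀)) * (starRingEnd ℂ) (ϱ₀₀ * α₀ + ϱ₁₀ * α₁) := by
    simp only [ϱ₀₀, ϱ₁₀, ϱ₀₁, ϱ₁₁, α₀, α₁, α₀', α₁', map_add, map_mul, map_neg,
      Complex.conj_ofReal, Complex.conj_I, hcc, he, hsplit, hsum, map_inv₀, inv_inv]
    field_simp [Complex.exp_ne_zero]
    ring
  have habs : ∀ z : ℂ, ‖Complex.exp (I * ((γ₀₁:ℂ) + γ₁₀)) * (starRingEnd ℂ) z‖
      = ‖z‖ := by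
    intro z
    rw [hsum]
    simp [Complex.norm_exp]
  refine ⟨?_, ?_, ?_⟩
  · rw [hA, norm_neg, habs, h2]
  · rw [hB, habs, h1]
    have h' : α₁' = -(starRingEnd ℂ) α₀ := by
      simp only [α₀, α₁', map_add, map_mul, Complex.conj_ofReal, Complex.conj_I]
      ring
    rw [h', norm_neg, Complex.norm_conj]
  · rw [hA, hB]
    have h3' : (starRingEnd ℂ) α₁ * (starRingEnd ℂ) (ϱ₀₀ * α₀ + ϱ₁₀ * α₁) =
        (starRingEnd ℂ) α₀ * (starRingEnd ℂ) (ϱ₀₁ * α₀ + ϱ₁₁ * α₁) := by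
      rw [← map_mul, ← map_mul, h3]
    have hA1 : α₁' = -(starRingEnd ℂ) α₀ := by
      simp only [α₀, α₁', map_add, map_mul, Complex.conj_ofReal, Complex.conj_I]
      ring
    have hA0 : α₀' = (starRingEnd ℂ) α₁ := by
      simp only [α₁, α₀', Complex.conj_ofReal]
    rw [hA1, hA0]
    linear_combination -Complex.exp (I * ((γ₀₁:ℂ) + γ₁₀)) * h3'
end
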